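/- arXiv:0801.3617 — 4 statements merged into one kernel-verified Lean document; each statement's English description precedes it below -/
import Mathlib

section
/- Let A be a C*-algebra, let E and F be Hilbert A-modules, and let T : E → F be a map admitting an adjoint S : F → E (i.e. ⟪T x, y⟫ = ⟪x, S y⟫ for all x ∈ E, y ∈ F). Then T is continuous (bounded). (Automatic continuity of adjointable maps, proved via the closed graph theorem using that the graph of T is the orthogonal of {(−S y, y) : y ∈ F}.) -/
open scoped RightActions

/-- The Hilbert C⋆-module class as it stood in Mathlib (Dec 2024): right action of `Aᵐᵒᵖ`,
inner product `A`-linear on the right in the second variable. -/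
class CStarModuleRight (A E : Type*) [NonUnitalSemiring A] [StarRing A] [Module ℂ A]
    [AddCommGroup E] [Module ℂ E] [PartialOrder A] [SMul Aᵐᵒᵖ E] [Norm A] [Norm E]
    extends Inner A E where
  inner_add_right {x} {y} {z} : inner x (y + z) = inner x y + inner x z
  inner_self_nonneg {x} : 0 ≤ inner x x
  inner_self {x} : inner x x = 0 ↔ x = 0
  inner_op_smul_right {a : A} {x y : E} : inner x (y <• a) = inner x y * a
  inner_smul_right_complex {z : ℂ} {x} {y} : inner x (z • y) = z • inner x y
  star_inner x y : star (inner x y) = inner y x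
  norm_eq_sqrt_norm_inner_self x : ‖x‖ = √‖inner x x‖

variable {A : Type*} [CStarAlgebra A] [PartialOrder A] [StarOrderedRing A]
variable {E : Type*} [NormedAddCommGroup E] [NormedSpace ℂ E] [SMul Aᵐᵒᵖ E]
  [CStarModuleRight A E] [CompleteSpace E]
variable {F : Type*} [NormedAddCommGroup F] [NormedSpace ℂ F] [SMul Aᵐᵒᵖ F]
  [CStarModuleRight A F] [CompleteSpace F]

local notation "⟪" x ", " y "⟫" => inner (𝕜 := A) x y

omit [StarOrderedRing A] in
private lemma inner_add_left' {G : Type*} [NormedAddCommGroup G] [NormedSpace ℂ G] [SMul Aᵐᵒᵖ G]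
    [CStarModuleRight A G] {x y z : G} : ⟪x + y, z⟫ = ⟪x, z⟫ + ⟪y, z⟫ := by
  rw [← CStarModuleRight.star_inner, CStarModuleRight.inner_add_right, star_add,
    CStarModuleRight.star_inner, CStarModuleRight.star_inner]

omit [StarOrderedRing A] in
private lemma inner_sub_left' {G : Type*} [NormedAddCommGroup G] [NormedSpace ℂ G] [SMul Aᵐᵒᵖ G]
    [CStarModuleRight A G] {x y z : G} : ⟪x - y, z⟫ = ⟪x, z⟫ - ⟪y, z⟫ := by
  refine eq_sub_of_add_eq ?_
  rw [← inner_add_left', sub_add_cancel]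

omit [StarOrderedRing A] in
private lemma inner_smul_left' {G : Type*} [NormedAddCommGroup G] [NormedSpace ℂ G] [SMul Aᵐᵒᵖ G]
    [CStarModuleRight A G] {c : ℂ} {x z : G} : ⟪c • x, z⟫ = star c • ⟪x, z⟫ := by
  rw [← CStarModuleRight.star_inner, CStarModuleRight.inner_smul_right_complex, star_smul,
    CStarModuleRight.star_inner]

private noncomputable def toOpMod {G : Type*} [NormedAddCommGroup G] [NormedSpace ℂ G]
    [SMul Aᵐᵒᵖ G] [CStarModuleRight A G] : CStarModule Aᵐᵒᵖ G where
  inner x y := MulOpposite.op ⟪x, y⟫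
  inner_add_right := by
    intro x y z
    simp only [CStarModuleRight.inner_add_right, MulOpposite.op_add]
  inner_self_nonneg := by
    intro x
    exact CStarModuleRight.inner_self_nonneg
  inner_self := by
    intro x
    simp only [MulOpposite.op_eq_zero_iff, CStarModuleRight.inner_self]
  inner_op_smul_right := by
    intro a x y
    have h := CStarModuleRight.inner_op_smul_right (A := A) (a := a.unop) (x := x) (y := y)
    simp only [MulOpposite.op_unop] at h
    rw [h, MulOpposite.op_mul, MulOpposite.op_unop]
  inner_smul_right_complex := by
    intro z x y
    rw [CStarModuleRight.inner_smul_right_complex, MulOpposite.op_smul]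
  star_inner := by
    intro x y
    rw [← MulOpposite.op_star, CStarModuleRight.star_inner]
  norm_eq_sqrt_norm_inner_self := by
    intro x
    rw [MulOpposite.norm_op, CStarModuleRight.norm_eq_sqrt_norm_inner_self (A := A)]

private lemma continuous_inner' {G : Type*} [NormedAddCommGroup G] [NormedSpace ℂ G]
    [SMul Aᵐᵒᵖ G] [CStarModuleRight A G] : Continuous (fun p : G × G => ⟪p.1, p.2⟫) := by
  letI : CStarModule Aᵐᵒᵖ G := toOpMod
  have := CStarModule.continuous_inner (A := Aᵐᵒᵖ) (E := G)
  exact MulOpposite.continuous_unop.comp this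

omit [StarOrderedRing A] [CompleteSpace F] in
private lemma ext_of_inner_left {a b : F} (h : ∀ y : F, ⟪a, y⟫ = ⟪b, y⟫) : a = b := by
  have : ⟪a - b, a - b⟫ = 0 := by
    simp only [inner_sub_left', h (a - b), sub_self]
  rw [CStarModuleRight.inner_self] at this
  exact sub_eq_zero.mp this

/-- An adjointable map between Hilbert C*-modules is automatically continuous. -/
theorem adjointable_continuous (T : E → F) (S : F → E)
    (hS : ∀ (x : E) (y : F), ⟪T x, y⟫ = ⟪x, S y⟫) :
    Continuous T := by
  let Tl : E →ₗ[ℂ] F :=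
    { toFun := T
      map_add' := fun x y => ext_of_inner_left (A := A) fun z => by
        simp [hS, inner_add_left']
      map_smul' := fun c x => ext_of_inner_left (A := A) fun z => by
        simp [hS, inner_smul_left'] }
  have hTl : ∀ x, Tl x = T x := fun _ => rfl
  have : Continuous Tl := by
    apply Tl.continuous_of_seq_closed_graph
    intro u x y hu hy
    refine ext_of_inner_left (A := A) fun z => ?_
    have h1 : Filter.Tendsto (fun n => ⟪(⇑Tl ∘ u) n, z⟫) Filter.atTop (nhds ⟪y, z⟫) :=
      ((continuous_inner' (A := A) (G := F)).tendsto (y, z)).comp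
        (hy.prodMk_nhds tendsto_const_nhds)
    have h2 : Filter.Tendsto (fun n => ⟪u n, S z⟫) Filter.atTop (nhds ⟪x, S z⟫) :=
      ((continuous_inner' (A := A) (G := E)).tendsto (x, S z)).comp
        (hu.prodMk_nhds tendsto_const_nhds)
    have heq : (fun n => ⟪(⇑Tl ∘ u) n, z⟫) = fun n => ⟪u n, S z⟫ := by
      ext n; exact hS (u n) z
    rw [heq] at h1
    have := tendsto_nhds_unique h1 h2
    rw [this, hTl, hS]
  exact this
end

section
/- Let A be a C*-algebra, let E and F be Hilbert A-modules, and let T : E → F be a continuous linear map with adjoint S : F → E. Then the closure of the range of S equals the closure of the range of S ∘ T : E → E, i.e. closure(S(F)) = closure((S ∘ T)(E)). (Proved using the norm-convergence T* = lim T*(1/n + TT*)^{-1} T T*.) -/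
open scoped RightActions

/-- The class `CStarModule` as it stood in the older Mathlib (right Hilbert modules, with
`Aᵐᵒᵖ` acting on `E`); Mathlib's `CStarModule` now describes left modules. -/
class RightCStarModule (A E : Type*) [NonUnitalSemiring A] [StarRing A]
    [Module ℂ A] [AddCommGroup E] [Module ℂ E] [PartialOrder A] [SMul Aᵐᵒᵖ E] [Norm A] [Norm E]
    extends Inner A E where
  inner_add_right {x} {y} {z} : inner x (y + z) = inner x y + inner x z
  inner_self_nonneg {x} : 0 ≤ inner x x
  inner_self {x} : inner x x = 0 ↔ x = 0
  inner_op_smul_right {a : A} {x y : E} : inner x (y <• a) = inner x y * a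
  inner_smul_right_complex {z : ℂ} {x} {y} : inner x (z • y) = z • inner x y
  star_inner x y : star (inner x y) = inner y x
  norm_eq_sqrt_norm_inner_self x : ‖x‖ = √‖inner x x‖

variable {A : Type*} [CStarAlgebra A] [PartialOrder A] [StarOrderedRing A]
variable {E : Type*} [NormedAddCommGroup E] [NormedSpace ℂ E] [SMul Aᵐᵒᵖ E]
  [RightCStarModule A E] [CompleteSpace E]
variable {F : Type*} [NormedAddCommGroup F] [NormedSpace ℂ F] [SMul Aᵐᵒᵖ F]
  [RightCStarModule A F] [CompleteSpace F]

local notation "⟪" x ", " y "⟫" => inner (𝕜 := A) x y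

set_option linter.unusedSectionVars false

namespace RightCStarModule

lemma inner_add_left {x y z : E} : ⟪x + y, z⟫ = ⟪x, z⟫ + ⟪y, z⟫ := by
  rw [← star_star (r := ⟪x + y, z⟫)]
  simp only [inner_add_right, star_add, star_inner]

lemma inner_op_smul_left {a : A} {x y : E} : ⟪x <• a, y⟫ = star a * ⟪x, y⟫ := by
  rw [← star_inner, inner_op_smul_right, star_mul, star_inner]

lemma inner_smul_left_complex {z : ℂ} {x y : E} : ⟪z • x, y⟫ = star z • ⟪x, y⟫ := by
  rw [← star_inner, inner_smul_right_complex, star_smul, star_inner]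

lemma inner_smul_left_real {z : ℝ} {x y : E} : ⟪z • x, y⟫ = z • ⟪x, y⟫ := by
  have h₁ : z • x = (z : ℂ) • x := by simp
  rw [h₁, inner_smul_left_complex]
  simp

lemma inner_smul_right_real {z : ℝ} {x y : E} : ⟪x, z • y⟫ = z • ⟪x, y⟫ := by
  have h₁ : z • y = (z : ℂ) • y := by simp
  rw [h₁, inner_smul_right_complex]
  simp

variable (A E) in
/-- The inner product as a sesquilinear map. -/
def innerₛₗ : E →ₗ⋆[ℂ] E →ₗ[ℂ] A where
  toFun x := { toFun := fun y => ⟪x, y⟫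
               map_add' := fun z y => inner_add_right
               map_smul' := fun z y => inner_smul_right_complex }
  map_add' z y := by ext; exact inner_add_left
  map_smul' z y := by ext; exact inner_smul_left_complex

lemma innerₛₗ_apply {x y : E} : innerₛₗ A E x y = ⟪x, y⟫ := rfl

lemma inner_zero_right {x : E} : ⟪x, 0⟫ = 0 := by simp [← innerₛₗ_apply]
lemma inner_zero_left {x : E} : ⟪0, x⟫ = 0 := by simp [← innerₛₗ_apply]
lemma inner_neg_right {x y : E} : ⟪x, -y⟫ = -⟪x, y⟫ := by simp [← innerₛₗ_apply]
lemma inner_neg_left {x y : E} : ⟪-x, y⟫ = -⟪x, y⟫ := by simp [← innerₛₗ_apply]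
lemma inner_sub_right {x y z : E} : ⟪x, y - z⟫ = ⟪x, y⟫ - ⟪x, z⟫ := by simp [← innerₛₗ_apply]
lemma inner_sub_left {x y z : E} : ⟪x - y, z⟫ = ⟪x, z⟫ - ⟪y, z⟫ := by simp [← innerₛₗ_apply]

lemma norm_sq_eq {x : E} : ‖x‖ ^ 2 = ‖⟪x, x⟫‖ := by
  rw [norm_eq_sqrt_norm_inner_self (A := A) x, Real.sq_sqrt (norm_nonneg _)]

lemma inner_mul_inner_swap_le {x y : E} : ⟪y, x⟫ * ⟪x, y⟫ ≤ ‖x‖ ^ 2 • ⟪y, y⟫ := by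
  rcases eq_or_ne x 0 with h | h
  · simp [h, inner_zero_left, inner_zero_right]
  · have h₁ : ∀ (a : A),
        (0 : A) ≤ ‖x‖ ^ 2 • (star a * a) - ‖x‖ ^ 2 • (⟪y, x⟫ * a)
                  - ‖x‖ ^ 2 • (star a * ⟪x, y⟫) + ‖x‖ ^ 2 • (‖x‖ ^ 2 • ⟪y, y⟫) := fun a => by
      calc (0 : A) ≤ ⟪x <• a - ‖x‖ ^ 2 • y, x <• a - ‖x‖ ^ 2 • y⟫ := by
                      exact inner_self_nonneg
            _ = star a * ⟪x, x⟫ * a - ‖x‖ ^ 2 • (⟪y, x⟫ * a)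
                  - ‖x‖ ^ 2 • (star a * ⟪x, y⟫) + ‖x‖ ^ 2 • (‖x‖ ^ 2 • ⟪y, y⟫) := by
                      simp only [inner_sub_right, inner_op_smul_right, inner_sub_left,
                        inner_op_smul_left, inner_smul_left_real, sub_mul, smul_mul_assoc,
                        inner_smul_right_real, smul_sub, mul_assoc, mul_smul_comm]
                      abel
            _ ≤ ‖x‖ ^ 2 • (star a * a) - ‖x‖ ^ 2 • (⟪y, x⟫ * a)
                  - ‖x‖ ^ 2 • (star a * ⟪x, y⟫) + ‖x‖ ^ 2 • (‖x‖ ^ 2 • ⟪y, y⟫) := by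
                      gcongr
                      calc _ ≤ ‖⟪x, x⟫‖ • (star a * a) :=
                          CStarAlgebra.star_left_conjugate_le_norm_smul (star_inner x x)
                        _ = (√‖⟪x, x⟫‖) ^ 2 • (star a * a) := by
                          rw [Real.sq_sqrt]
                          positivity
                        _ = ‖x‖ ^ 2 • (star a * a) := by
                          rw [← norm_eq_sqrt_norm_inner_self]
    specialize h₁ ⟪x, y⟫
    simp only [star_inner, sub_self, zero_sub, le_neg_add_iff_add_le, add_zero] at h₁
    rwa [smul_le_smul_iff_of_pos_left (pow_pos (norm_pos_iff.mpr h) _)] at h₁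

variable (E) in
lemma norm_inner_le {x y : E} : ‖⟪x, y⟫‖ ≤ ‖x‖ * ‖y‖ := by
  have := calc ‖⟪x, y⟫‖ ^ 2 = ‖⟪y, x⟫ * ⟪x, y⟫‖ := by
                rw [← star_inner x, CStarRing.norm_star_mul_self, pow_two]
    _ ≤ ‖‖x‖ ^ 2 • ⟪y, y⟫‖ := by
                refine CStarAlgebra.norm_le_norm_of_nonneg_of_le ?_ inner_mul_inner_swap_le
                rw [← star_inner x]
                exact star_mul_self_nonneg ⟪x, y⟫
    _ = ‖x‖ ^ 2 * ‖⟪y, y⟫‖ := by simp [norm_smul]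
    _ = ‖x‖ ^ 2 * ‖y‖ ^ 2 := by rw [norm_sq_eq (A := A) (x := y)]
    _ = (‖x‖ * ‖y‖) ^ 2 := by simp only [mul_pow]
  refine (pow_le_pow_iff_left₀ (norm_nonneg _) ?_ (by simp)).mp this
  positivity

/-- The inner product as a continuous sesquilinear map. -/
noncomputable def innerSL : E →L⋆[ℂ] E →L[ℂ] A :=
  LinearMap.mkContinuous₂ (innerₛₗ A E) 1 <| fun x y => by
    rw [innerₛₗ_apply, one_mul]; exact norm_inner_le E

lemma innerSL_apply {x y : E} : innerSL (A := A) x y = ⟪x, y⟫ := rfl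

lemma continuous_inner : Continuous (fun x : E × E => ⟪x.1, x.2⟫) := by
  simp_rw [← innerSL_apply]
  fun_prop

end RightCStarModule

attribute [simp] RightCStarModule.inner_add_right RightCStarModule.star_inner
  RightCStarModule.inner_op_smul_right RightCStarModule.inner_smul_right_complex
  RightCStarModule.inner_add_left RightCStarModule.inner_op_smul_left
  RightCStarModule.inner_smul_left_complex RightCStarModule.inner_smul_left_real
  RightCStarModule.inner_smul_right_real RightCStarModule.inner_zero_right
  RightCStarModule.inner_zero_left RightCStarModule.inner_neg_right
  RightCStarModule.inner_neg_left RightCStarModule.inner_sub_right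
  RightCStarModule.inner_sub_left

noncomputable section

variable (A F) in
/-- An operator on a Hilbert C*-module together with an adjoint. -/
structure Adjointable : Type _ where
  toL : F →L[ℂ] F
  adj : F →L[ℂ] F
  isAdj : ∀ v w : F, ⟪toL v, w⟫ = ⟪v, adj w⟫

namespace Adjointable

@[ext] lemma ext {p q : Adjointable A F} (h1 : p.toL = q.toL) (h2 : p.adj = q.adj) : p = q := by
  cases p; cases q; simp_all

lemma isAdj' (p : Adjointable A F) (v w : F) : ⟪p.adj v, w⟫ = ⟪v, p.toL w⟫ := by
  rw [← RightCStarModule.star_inner, ← p.isAdj, RightCStarModule.star_inner]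

lemma toL_injective : Function.Injective (toL : Adjointable A F → (F →L[ℂ] F)) := by
  intro p q h
  refine ext h ?_
  ext w
  have key : ∀ v, ⟪v, p.adj w - q.adj w⟫ = 0 := by
    intro v
    rw [RightCStarModule.inner_sub_right, ← p.isAdj, ← q.isAdj, h, sub_self]
  have := key (p.adj w - q.adj w)
  rw [RightCStarModule.inner_self] at this
  simpa [sub_eq_zero] using this

instance : Zero (Adjointable A F) := ⟨⟨0, 0, by simp⟩⟩
instance : One (Adjointable A F) := ⟨⟨1, 1, by simp⟩⟩
instance : Add (Adjointable A F) :=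
  ⟨fun p q => ⟨p.toL + q.toL, p.adj + q.adj, fun v w => by
    simp [RightCStarModule.inner_add_left, p.isAdj, q.isAdj]⟩⟩
instance : Neg (Adjointable A F) :=
  ⟨fun p => ⟨-p.toL, -p.adj, fun v w => by simp [p.isAdj]⟩⟩
instance : Sub (Adjointable A F) :=
  ⟨fun p q => ⟨p.toL - q.toL, p.adj - q.adj, fun v w => by
    simp [RightCStarModule.inner_sub_left, p.isAdj, q.isAdj]⟩⟩
instance : Mul (Adjointable A F) :=
  ⟨fun p q => ⟨p.toL ∘L q.toL, q.adj ∘L p.adj, fun v w => by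
    simp [p.isAdj, q.isAdj]⟩⟩
instance : Star (Adjointable A F) := ⟨fun p => ⟨p.adj, p.toL, p.isAdj'⟩⟩

lemma real_smul_isAdj (r : ℝ) (p : Adjointable A F) (v w : F) :
    ⟪(r • p.toL) v, w⟫ = ⟪v, (r • p.adj) w⟫ := by
  simp [RightCStarModule.inner_smul_left_real, RightCStarModule.inner_smul_right_real, p.isAdj]

instance : SMul ℂ (Adjointable A F) :=
  ⟨fun z p => ⟨z • p.toL, star z • p.adj, fun v w => by
    simp [RightCStarModule.inner_smul_left_complex, RightCStarModule.inner_smul_right_complex, p.isAdj]⟩⟩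

instance : SMul ℕ (Adjointable A F) :=
  ⟨fun n p => ⟨(n : ℝ) • p.toL, (n : ℝ) • p.adj, real_smul_isAdj _ p⟩⟩
instance : SMul ℤ (Adjointable A F) :=
  ⟨fun n p => ⟨(n : ℝ) • p.toL, (n : ℝ) • p.adj, real_smul_isAdj _ p⟩⟩

lemma pow_isAdj (p : Adjointable A F) (n : ℕ) : ∀ v w : F,
    ⟪(p.toL ^ n) v, w⟫ = ⟪v, (p.adj ^ n) w⟫ := by
  induction n with
  | zero => simp
  | succ n ih =>
    intro v w
    rw [pow_succ, pow_succ']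
    simp only [ContinuousLinearMap.mul_apply]
    rw [ih, p.isAdj]

instance : Pow (Adjointable A F) ℕ :=
  ⟨fun p n => ⟨p.toL ^ n, p.adj ^ n, pow_isAdj p n⟩⟩

instance : NatCast (Adjointable A F) :=
  ⟨fun n => ⟨(n : ℝ) • 1, (n : ℝ) • 1, real_smul_isAdj _ 1⟩⟩
instance : IntCast (Adjointable A F) :=
  ⟨fun n => ⟨(n : ℝ) • 1, (n : ℝ) • 1, real_smul_isAdj _ 1⟩⟩

def toProd (p : Adjointable A F) : (F →L[ℂ] F) × (F →L[ℂ] F)ᵐᵒᵖ :=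
  (p.toL, MulOpposite.op p.adj)

lemma toProd_injective : Function.Injective (toProd : Adjointable A F → _) := by
  intro p q h
  have h2 := congrArg Prod.snd h
  exact ext (congrArg Prod.fst h) (MulOpposite.op_injective h2)

instance instRing : Ring (Adjointable A F) :=
  toProd_injective.ring toProd rfl rfl (fun _ _ => rfl) (fun _ _ => rfl) (fun _ => rfl)
    (fun _ _ => rfl)
    (fun n p => by
      simp only [toProd, Prod.ext_iff]
      constructor
      · show (n : ℝ) • p.toL = _
        rw [Prod.smul_fst]
        simp [Nat.cast_smul_eq_nsmul]
      · show MulOpposite.op ((n : ℝ) • p.adj) = _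
        rw [Prod.smul_snd]
        simp [Nat.cast_smul_eq_nsmul]
        exact (Nat.cast_commute _ _).eq.symm)
    (fun n p => by
      simp only [toProd, Prod.ext_iff]
      constructor
      · show (n : ℝ) • p.toL = _
        rw [Prod.smul_fst]
        simp [Int.cast_smul_eq_zsmul]
      · show MulOpposite.op ((n : ℝ) • p.adj) = _
        rw [Prod.smul_snd]
        simp [Int.cast_smul_eq_zsmul]
        exact (Int.cast_commute _ _).eq.symm)
    (fun p n => rfl)
    (fun n => by
      simp only [toProd, Prod.ext_iff]
      constructor
      · show (n : ℝ) • (1 : F →L[ℂ] F) = _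
        rw [Nat.cast_smul_eq_nsmul, nsmul_eq_mul, mul_one]; rfl
      · show MulOpposite.op ((n : ℝ) • (1 : F →L[ℂ] F)) = _
        rw [Nat.cast_smul_eq_nsmul, nsmul_eq_mul, mul_one]
        simp)
    (fun n => by
      simp only [toProd, Prod.ext_iff]
      constructor
      · show (n : ℝ) • (1 : F →L[ℂ] F) = _
        rw [Int.cast_smul_eq_zsmul, zsmul_eq_mul, mul_one]; rfl
      · show MulOpposite.op ((n : ℝ) • (1 : F →L[ℂ] F)) = _
        rw [Int.cast_smul_eq_zsmul, zsmul_eq_mul, mul_one]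
        simp)

def toProdHom : Adjointable A F →+* (F →L[ℂ] F) × (F →L[ℂ] F)ᵐᵒᵖ where
  toFun := toProd
  map_one' := rfl
  map_mul' _ _ := rfl
  map_zero' := rfl
  map_add' _ _ := rfl

instance instNormedRing : NormedRing (Adjointable A F) :=
  NormedRing.induced _ _ (toProdHom : Adjointable A F →+* _) toProd_injective

lemma norm_def (p : Adjointable A F) : ‖p‖ = max ‖p.toL‖ ‖p.adj‖ := rfl

-- basic simp lemmas about operations
@[simp] lemma mul_toL (p q : Adjointable A F) : (p * q).toL = p.toL ∘L q.toL := rfl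
@[simp] lemma mul_adj (p q : Adjointable A F) : (p * q).adj = q.adj ∘L p.adj := rfl
@[simp] lemma one_toL : (1 : Adjointable A F).toL = 1 := rfl
@[simp] lemma one_adj : (1 : Adjointable A F).adj = 1 := rfl
@[simp] lemma zero_toL : (0 : Adjointable A F).toL = 0 := rfl
@[simp] lemma zero_adj : (0 : Adjointable A F).adj = 0 := rfl
@[simp] lemma add_toL (p q : Adjointable A F) : (p + q).toL = p.toL + q.toL := rfl
@[simp] lemma add_adj (p q : Adjointable A F) : (p + q).adj = p.adj + q.adj := rfl
@[simp] lemma sub_toL (p q : Adjointable A F) : (p - q).toL = p.toL - q.toL := rfl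
@[simp] lemma sub_adj (p q : Adjointable A F) : (p - q).adj = p.adj - q.adj := rfl
@[simp] lemma pow_toL (p : Adjointable A F) (n : ℕ) : (p ^ n).toL = p.toL ^ n := rfl
@[simp] lemma pow_adj (p : Adjointable A F) (n : ℕ) : (p ^ n).adj = p.adj ^ n := rfl
@[simp] lemma star_toL (p : Adjointable A F) : (star p).toL = p.adj := rfl
@[simp] lemma star_adj (p : Adjointable A F) : (star p).adj = p.toL := rfl
@[simp] lemma smul_toL (z : ℂ) (p : Adjointable A F) : (z • p).toL = z • p.toL := rfl
@[simp] lemma smul_adj (z : ℂ) (p : Adjointable A F) : (z • p).adj = star z • p.adj := rfl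

def toLHom : Adjointable A F →+ (F →L[ℂ] F) where
  toFun := toL
  map_zero' := rfl
  map_add' _ _ := rfl

instance instModule : Module ℂ (Adjointable A F) :=
  toL_injective.module ℂ (toLHom : Adjointable A F →+ _) (fun _ _ => rfl)

instance instAlgebra : Algebra ℂ (Adjointable A F) :=
  Algebra.ofModule
    (fun z p q => ext (by simp [ContinuousLinearMap.smul_comp]) (by simp [ContinuousLinearMap.comp_smul]))
    (fun z p q => ext (by simp [ContinuousLinearMap.comp_smul]) (by simp [ContinuousLinearMap.smul_comp]))

instance instNormedAlgebra : NormedAlgebra ℂ (Adjointable A F) where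
  norm_smul_le z p := by
    rw [norm_def, norm_def]
    apply max_le
    · calc ‖(z • p).toL‖ = ‖z‖ * ‖p.toL‖ := norm_smul z p.toL
        _ ≤ ‖z‖ * max ‖p.toL‖ ‖p.adj‖ := by gcongr; exact le_max_left _ _
    · calc ‖(z • p).adj‖ = ‖star z‖ * ‖p.adj‖ := norm_smul (star z) p.adj
        _ = ‖z‖ * ‖p.adj‖ := by rw [norm_star]
        _ ≤ ‖z‖ * max ‖p.toL‖ ‖p.adj‖ := by gcongr; exact le_max_right _ _

instance instStarRing : StarRing (Adjointable A F) where
  star_involutive p := rfl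
  star_mul p q := rfl
  star_add p q := rfl

instance instStarModule : StarModule ℂ (Adjointable A F) where
  star_smul z p := ext rfl (by simp)

/-- Key norm estimate. -/
lemma norm_sq_toL_le (p : Adjointable A F) : ‖p.toL‖ ^ 2 ≤ ‖p.adj ∘L p.toL‖ := by
  have key : ∀ v : F, ‖p.toL v‖ ≤ Real.sqrt ‖p.adj ∘L p.toL‖ * ‖v‖ := by
    intro v
    have h1 : ‖p.toL v‖ ^ 2 = ‖⟪p.toL v, p.toL v⟫‖ := RightCStarModule.norm_sq_eq
    have h2 : ⟪p.toL v, p.toL v⟫ = ⟪v, (p.adj ∘L p.toL) v⟫ := p.isAdj v _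
    have h3 : ‖⟪v, (p.adj ∘L p.toL) v⟫‖ ≤ ‖v‖ * ‖(p.adj ∘L p.toL) v‖ := RightCStarModule.norm_inner_le F
    have h4 : ‖(p.adj ∘L p.toL) v‖ ≤ ‖p.adj ∘L p.toL‖ * ‖v‖ := (p.adj ∘L p.toL).le_opNorm v
    have h5 : ‖p.toL v‖ ^ 2 ≤ ‖p.adj ∘L p.toL‖ * ‖v‖ ^ 2 := by
      rw [h1, h2]
      calc ‖⟪v, (p.adj ∘L p.toL) v⟫‖ ≤ ‖v‖ * (‖p.adj ∘L p.toL‖ * ‖v‖) :=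
            h3.trans (by gcongr)
        _ = ‖p.adj ∘L p.toL‖ * ‖v‖ ^ 2 := by ring
    calc ‖p.toL v‖ = Real.sqrt (‖p.toL v‖ ^ 2) := by
          rw [Real.sqrt_sq (norm_nonneg _)]
      _ ≤ Real.sqrt (‖p.adj ∘L p.toL‖ * ‖v‖ ^ 2) := Real.sqrt_le_sqrt h5
      _ = Real.sqrt ‖p.adj ∘L p.toL‖ * ‖v‖ := by
          rw [Real.sqrt_mul (norm_nonneg _), Real.sqrt_sq (norm_nonneg _)]
  have h6 : ‖p.toL‖ ≤ Real.sqrt ‖p.adj ∘L p.toL‖ :=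
    ContinuousLinearMap.opNorm_le_bound _ (Real.sqrt_nonneg _) key
  calc ‖p.toL‖ ^ 2 ≤ Real.sqrt ‖p.adj ∘L p.toL‖ ^ 2 := by gcongr
    _ = ‖p.adj ∘L p.toL‖ := Real.sq_sqrt (norm_nonneg _)

lemma norm_adj_eq (p : Adjointable A F) : ‖p.adj‖ = ‖p.toL‖ := by
  have key : ∀ q : Adjointable A F, ‖q.toL‖ ≤ ‖q.adj‖ := by
    intro q
    rcases eq_or_lt_of_le (norm_nonneg q.toL) with h | h
    · rw [← h]; positivity
    · have h1 := (norm_sq_toL_le q).trans ((q.adj.opNorm_comp_le q.toL))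
      rw [pow_two] at h1
      exact le_of_mul_le_mul_right (by linarith [h1]) h
  exact le_antisymm (key (star p)) (key p)

lemma norm_toL_eq (p : Adjointable A F) : ‖p‖ = ‖p.toL‖ := by
  rw [norm_def, norm_adj_eq, max_self]

lemma norm_toL_le (p : Adjointable A F) : ‖p.toL‖ ≤ ‖p‖ := by
  rw [norm_toL_eq]

instance instCStarRing : CStarRing (Adjointable A F) where
  norm_mul_self_le p := by
    rw [norm_toL_eq, norm_toL_eq, mul_toL, star_toL, ← pow_two]
    exact norm_sq_toL_le p

instance instCompleteSpace : CompleteSpace (Adjointable A F) := by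
  apply Metric.complete_of_cauchySeq_tendsto
  intro u hu
  have hdL : ∀ m n, ‖(u m).toL - (u n).toL‖ ≤ dist (u m) (u n) := by
    intro m n
    rw [dist_eq_norm, norm_def, sub_toL]
    exact le_max_left _ _
  have hdA : ∀ m n, ‖(u m).adj - (u n).adj‖ ≤ dist (u m) (u n) := by
    intro m n
    rw [dist_eq_norm, norm_def, sub_adj]
    exact le_max_right _ _
  have hcL : CauchySeq (fun n => (u n).toL) := by
    rw [Metric.cauchySeq_iff] at hu ⊢
    intro ε hε
    obtain ⟨N, hN⟩ := hu ε hε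
    exact ⟨N, fun m hm n hn => lt_of_le_of_lt (by rw [dist_eq_norm]; exact hdL m n) (hN m hm n hn)⟩
  have hcA : CauchySeq (fun n => (u n).adj) := by
    rw [Metric.cauchySeq_iff] at hu ⊢
    intro ε hε
    obtain ⟨N, hN⟩ := hu ε hε
    exact ⟨N, fun m hm n hn => lt_of_le_of_lt (by rw [dist_eq_norm]; exact hdA m n) (hN m hm n hn)⟩
  obtain ⟨X, hX⟩ := cauchySeq_tendsto_of_complete hcL
  obtain ⟨Y, hY⟩ := cauchySeq_tendsto_of_complete hcA
  have happ : ∀ (Z : F →L[ℂ] F) (z : ℕ → F →L[ℂ] F), Filter.Tendsto z Filter.atTop (nhds Z) →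
      ∀ (v : F), Filter.Tendsto (fun n => z n v) Filter.atTop (nhds (Z v)) := by
    intro Z z hz v
    rw [tendsto_iff_norm_sub_tendsto_zero] at hz ⊢
    refine squeeze_zero (fun n => norm_nonneg _) (fun n => ?_) (by
      simpa using hz.mul_const ‖v‖)
    calc ‖z n v - Z v‖ = ‖(z n - Z) v‖ := by simp
      _ ≤ ‖z n - Z‖ * ‖v‖ := (z n - Z).le_opNorm v
  have hadj : ∀ v w : F, ⟪X v, w⟫ = ⟪v, Y w⟫ := by
    intro v w
    have l1 : Filter.Tendsto (fun n => ⟪(u n).toL v, w⟫) Filter.atTop (nhds ⟪X v, w⟫) := by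
      have : Continuous (fun z : F => ⟪z, w⟫) := by
        have := RightCStarModule.continuous_inner (A := A) (E := F)
        fun_prop
      exact (this.continuousAt.tendsto).comp (happ X (fun n => (u n).toL) hX v)
    have l2 : Filter.Tendsto (fun n => ⟪v, (u n).adj w⟫) Filter.atTop (nhds ⟪v, Y w⟫) := by
      have : Continuous (fun z : F => ⟪v, z⟫) := by
        have := RightCStarModule.continuous_inner (A := A) (E := F)
        fun_prop
      exact (this.continuousAt.tendsto).comp (happ Y (fun n => (u n).adj) hY w)
    have : (fun n => ⟪(u n).toL v, w⟫) = fun n => ⟪v, (u n).adj w⟫ := by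
      funext n; exact (u n).isAdj v w
    rw [this] at l1
    exact tendsto_nhds_unique l1 l2
  refine ⟨⟨X, Y, hadj⟩, ?_⟩
  rw [tendsto_iff_dist_tendsto_zero]
  have hb : ∀ n, dist (u n) ⟨X, Y, hadj⟩ ≤ ‖(u n).toL - X‖ + ‖(u n).adj - Y‖ := by
    intro n
    rw [dist_eq_norm, norm_def, sub_toL, sub_adj]
    exact max_le (le_add_of_nonneg_right (norm_nonneg _)) (le_add_of_nonneg_left (norm_nonneg _))
  have h1 : Filter.Tendsto (fun n => ‖(u n).toL - X‖ + ‖(u n).adj - Y‖) Filter.atTop (nhds 0) := by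
    rw [show (0 : ℝ) = 0 + 0 by ring]
    exact ((tendsto_iff_norm_sub_tendsto_zero.mp hX).add (tendsto_iff_norm_sub_tendsto_zero.mp hY))
  refine squeeze_zero (fun n => dist_nonneg) hb h1

instance instCStarAlgebra : CStarAlgebra (Adjointable A F) where
  complete := CompleteSpace.complete

@[simp] lemma neg_toL (p : Adjointable A F) : (-p).toL = -p.toL := rfl
@[simp] lemma neg_adj (p : Adjointable A F) : (-p).adj = -p.adj := rfl

lemma adj_eq_toL {p : Adjointable A F} (hp : IsSelfAdjoint p) : p.adj = p.toL :=
  congrArg toL hp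

lemma isAdj_self {p : Adjointable A F} (hp : IsSelfAdjoint p) (v w : F) :
    ⟪p.toL v, w⟫ = ⟪v, p.toL w⟫ := by
  conv_lhs => rw [p.isAdj v w, adj_eq_toL hp]

example (p : Adjointable A F) (hp : IsSelfAdjoint p) : cfc (fun t : ℝ => t) p = p :=
  cfc_id' ℝ p

lemma spectrum_zero_subset : spectrum ℝ (0 : Adjointable A F) ⊆ {0} := by
  intro s hs
  simp only [Set.mem_singleton_iff]
  by_contra hs0
  rw [spectrum.mem_iff, sub_zero] at hs
  exact hs ((IsUnit.mk0 s hs0).map (algebraMap ℝ (Adjointable A F)))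

lemma spectrum_nonneg_of_inner (p : Adjointable A F) (hp : IsSelfAdjoint p)
    (hpos : ∀ v : F, 0 ≤ ⟪v, p.toL v⟫) : ∀ t ∈ spectrum ℝ p, 0 ≤ t := by
  set nf : ℝ → ℝ := fun t => max (-t) 0 with hnf
  have hnf_cont : Continuous nf := by fun_prop
  set f : ℝ → ℝ := fun t => Real.sqrt (nf t) ^ 3 with hf
  have hf_cont : Continuous f := by
    apply Continuous.pow
    exact Real.continuous_sqrt.comp hnf_cont
  set e : Adjointable A F := cfc f p with he
  have he_sa : IsSelfAdjoint e := cfc_predicate f p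
  set m : Adjointable A F := cfc nf p with hm
  have hm_sa : IsSelfAdjoint m := cfc_predicate nf p
  -- m * p * m = -(e * e)
  have h1 : m * p * m = cfc (fun t => nf t * t * nf t) p := by
    have h0 : m * p * m = cfc nf p * cfc (fun x : ℝ => x) p * cfc nf p := by
      rw [hm, cfc_id' ℝ p]
    rw [h0, ← cfc_mul nf (fun x : ℝ => x) p (hf := hnf_cont.continuousOn) (hg := continuous_id.continuousOn),
      ← cfc_mul (fun x : ℝ => nf x * x) nf p (hf := by fun_prop)
        (hg := hnf_cont.continuousOn)]
  have h2 : e * e = cfc (fun t => f t * f t) p := by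
    rw [he, ← cfc_mul (hf := hf_cont.continuousOn) (hg := hf_cont.continuousOn)]
  have h3 : (fun t => nf t * t * nf t) = fun t => -(f t * f t) := by
    funext t
    have hnn : 0 ≤ nf t := le_max_right _ _
    have : Real.sqrt (nf t) ^ 3 * Real.sqrt (nf t) ^ 3 = nf t ^ 3 := by
      rw [← pow_add]
      have : Real.sqrt (nf t) ^ (3 + 3) = (Real.sqrt (nf t) ^ 2) ^ 3 := by ring
      rw [this, Real.sq_sqrt hnn]
    simp only [hf]
    rw [this]
    rcases le_or_gt t 0 with ht | ht
    · have : nf t = -t := max_eq_left (by linarith)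
      rw [this]; ring
    · have : nf t = 0 := max_eq_right (by linarith)
      rw [this]; ring
  have h4 : m * p * m = -(e * e) := by
    rw [h1, h2, h3, cfc_neg]
  -- pointwise positivity forces e = 0
  have he0 : e = 0 := by
    have key : ∀ y : F, e.toL y = 0 := by
      intro y
      have k1 : 0 ≤ ⟪m.toL y, p.toL (m.toL y)⟫ := hpos _
      have k2 : ⟪m.toL y, p.toL (m.toL y)⟫ = ⟪y, (m * p * m).toL y⟫ := by
        have : (m * p * m).toL y = m.toL (p.toL (m.toL y)) := rfl
        rw [this, ← isAdj_self hm_sa]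
      have k3 : ⟪y, (-(e * e)).toL y⟫ = -⟪e.toL y, e.toL y⟫ := by
        have h5 : (-(e * e)).toL y = -(e.toL (e.toL y)) := rfl
        rw [h5, RightCStarModule.inner_neg_right, isAdj_self he_sa]
      have k4 : 0 ≤ -⟪e.toL y, e.toL y⟫ := by
        rw [← k3, ← h4, ← k2]; exact k1
      have k5 : (0:A) ≤ ⟪e.toL y, e.toL y⟫ := RightCStarModule.inner_self_nonneg
      have : ⟪e.toL y, e.toL y⟫ = 0 := le_antisymm (neg_nonneg.mp k4) k5
      exact RightCStarModule.inner_self.mp this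
    have htoL : e.toL = 0 := by ext y; exact key y
    refine ext htoL ?_
    rw [adj_eq_toL he_sa, htoL]; rfl
  -- spectral mapping
  intro t ht
  have hmem : f t ∈ spectrum ℝ e := by
    rw [he, cfc_map_spectrum (hf := hf_cont.continuousOn)]
    exact ⟨t, ht, rfl⟩
  rw [he0] at hmem
  have := spectrum_zero_subset hmem
  simp only [Set.mem_singleton_iff, hf] at this
  have h6 : Real.sqrt (nf t) = 0 := by
    exact pow_eq_zero_iff (by norm_num) |>.mp this
  have h7 : nf t = 0 := by
    rw [Real.sqrt_eq_zero (le_max_right _ _)] at h6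
    exact h6
  have := le_of_max_le_left (le_of_eq h7)
  linarith

lemma norm_one_le : ‖(1 : Adjointable A F)‖ ≤ 1 := by
  rw [norm_toL_eq, one_toL]
  exact ContinuousLinearMap.norm_id_le

lemma abs_le_of_mem_spectrum (p : Adjointable A F) (t : ℝ) (ht : t ∈ spectrum ℝ p) :
    |t| ≤ ‖p‖ := by
  have h := spectrum.norm_le_norm_mul_of_mem ht
  rw [Real.norm_eq_abs] at h
  calc |t| ≤ ‖p‖ * ‖(1 : Adjointable A F)‖ := h
    _ ≤ ‖p‖ * 1 := by gcongr; exact norm_one_le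
    _ = ‖p‖ := mul_one _

end Adjointable

/-- Bernoulli-type auxiliary inequality. -/
lemma bernoulli_aux {s : ℝ} (h0 : 0 ≤ s) (h1 : s ≤ 1) : ∀ n : ℕ, (1-s)^n * (1 + n*s) ≤ 1 := by
  intro n
  induction n with
  | zero => simp
  | succ n ih =>
    have hs1 : 0 ≤ 1 - s := by linarith
    have h2 : (1-s)*(1+((n:ℝ)+1)*s) ≤ 1 + n*s := by nlinarith [mul_nonneg (Nat.cast_nonneg n) (mul_self_nonneg s), mul_self_nonneg s]
    have hpow : (0:ℝ) ≤ (1-s)^n := pow_nonneg hs1 n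
    calc (1-s)^(n+1) * (1+((n:ℕ)+1 : ℕ)*s) = (1-s)^n * ((1-s)*(1+((n:ℝ)+1)*s)) := by
          push_cast; ring
      _ ≤ (1-s)^n * (1+n*s) := by gcongr
      _ ≤ 1 := ih

lemma poly_bound {s : ℝ} (h0 : 0 ≤ s) (h1 : s ≤ 1) (n : ℕ) : s*(1-s)^n ≤ 1/((n:ℝ)+1) := by
  have hb := bernoulli_aux h0 h1 n
  have hpow : (0:ℝ) ≤ (1-s)^n := pow_nonneg (by linarith) n
  have h3 : ((n:ℝ)+1)*(s*(1-s)^n) ≤ 1 := by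
    calc ((n:ℝ)+1)*(s*(1-s)^n) = (((n:ℝ)+1)*s)*(1-s)^n := by ring
      _ ≤ (1+n*s)*(1-s)^n := by
          have : ((n:ℝ)+1)*s ≤ 1+n*s := by nlinarith
          gcongr
      _ ≤ 1 := by rw [mul_comm]; exact hb
  have hn : (0:ℝ) < (n:ℝ)+1 := by positivity
  rw [le_div_iff₀ hn, mul_comm]
  exact h3

namespace Adjointable

/-- The key norm estimate on `cⁿ * b * cⁿ`. -/
lemma norm_sandwich_le (b : Adjointable A F) (hb : IsSelfAdjoint b)
    (hpos : ∀ v : F, 0 ≤ ⟪v, b.toL v⟫) (n : ℕ) :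
    ‖(cfc (fun t : ℝ => 1 - (‖b‖+1)⁻¹ * t) b) ^ n * b *
      (cfc (fun t : ℝ => 1 - (‖b‖+1)⁻¹ * t) b) ^ n‖ ≤ (‖b‖+1) / ((n:ℝ)+1) := by
  set M : ℝ := ‖b‖ + 1 with hM
  have hM0 : 0 < M := by positivity
  set cf : ℝ → ℝ := fun t => 1 - M⁻¹ * t with hcf
  have hcf_cont : Continuous cf := by fun_prop
  have h1 : (cfc cf b) ^ n = cfc (fun t => cf t ^ n) b :=
    (cfc_pow cf n b (hf := hcf_cont.continuousOn)).symm
  have h2 : (cfc cf b) ^ n * b * (cfc cf b) ^ n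
      = cfc (fun t => cf t ^ n * t * cf t ^ n) b := by
    rw [h1]
    nth_rewrite 2 [← cfc_id' ℝ b]
    rw [← cfc_mul (fun t => cf t ^ n) (fun x : ℝ => x) b
        (hf := by fun_prop) (hg := continuous_id.continuousOn),
      ← cfc_mul (fun t => cf t ^ n * t) (fun t => cf t ^ n) b
        (hf := by fun_prop) (hg := by fun_prop)]
  rw [h2]
  apply norm_cfc_le (by positivity)
  intro t ht
  have ht0 : 0 ≤ t := spectrum_nonneg_of_inner b hb hpos t ht
  have htM : t ≤ M := ((le_abs_self t).trans (abs_le_of_mem_spectrum b t ht)).trans (by linarith)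
  set s : ℝ := M⁻¹ * t with hs
  have hs0 : 0 ≤ s := by positivity
  have hs1 : s ≤ 1 := by
    calc s = M⁻¹ * t := hs
      _ ≤ M⁻¹ * M := by gcongr
      _ = 1 := inv_mul_cancel₀ hM0.ne'
  have hts : t = M * s := by
    rw [hs]; field_simp
  have hcft : cf t = 1 - s := by rw [hcf, hs]
  have hval : cf t ^ n * t * cf t ^ n = M * (s * ((1-s)^n * (1-s)^n)) := by
    rw [hcft, hts]; ring
  have hpownn : (0:ℝ) ≤ (1-s)^n := pow_nonneg (by linarith) n
  have hvalnn : 0 ≤ cf t ^ n * t * cf t ^ n := by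
    rw [hval]; positivity
  rw [Real.norm_eq_abs, abs_of_nonneg hvalnn, hval]
  have hp1 : (1-s)^n ≤ 1 := pow_le_one₀ (by linarith) (by linarith)
  calc M * (s * ((1-s)^n * (1-s)^n)) ≤ M * (s * ((1-s)^n * 1)) := by gcongr
    _ = M * (s * (1-s)^n) := by ring
    _ ≤ M * (1/((n:ℝ)+1)) := by gcongr; exact poly_bound hs0 hs1 n
    _ = M / ((n:ℝ)+1) := by ring

/-- The geometric-series identity: `1 - cⁿ = b * eₙ`. -/
lemma one_sub_pow_eq (b : Adjointable A F) (hb : IsSelfAdjoint b) (n : ℕ) :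
    1 - (cfc (fun t : ℝ => 1 - (‖b‖+1)⁻¹ * t) b) ^ n
      = b * cfc (fun t : ℝ =>
          (‖b‖+1)⁻¹ * (∑ k ∈ Finset.range n, (1 - (‖b‖+1)⁻¹ * t) ^ k)) b := by
  set M : ℝ := ‖b‖ + 1 with hM
  have hM0 : 0 < M := by positivity
  set cf : ℝ → ℝ := fun t => 1 - M⁻¹ * t with hcf
  have hcf_cont : Continuous cf := by fun_prop
  set enf : ℝ → ℝ := fun t => M⁻¹ * (∑ k ∈ Finset.range n, cf t ^ k) with henf
  have henf_cont : Continuous enf := by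
    apply Continuous.mul continuous_const
    exact continuous_finset_sum _ (fun k _ => hcf_cont.pow k)
  have h1 : b * cfc enf b = cfc (fun t => t * enf t) b := by
    nth_rewrite 1 [← cfc_id' ℝ b]
    rw [← cfc_mul (fun x : ℝ => x) enf b
      (hf := continuous_id.continuousOn) (hg := henf_cont.continuousOn)]
  have h2 : (fun t : ℝ => t * enf t) = fun t => 1 - cf t ^ n := by
    funext t
    have hg := geom_sum_mul (cf t) n
    have h3 : cf t - 1 = -(M⁻¹ * t) := by rw [hcf]; ring
    rw [h3] at hg
    simp only [henf]
    linear_combination -hg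
  rw [h1, h2, cfc_sub (fun _ : ℝ => (1:ℝ)) (fun t => cf t ^ n) b
    (hf := continuous_const.continuousOn) (hg := (hcf_cont.pow n).continuousOn),
    cfc_const_one ℝ b, cfc_pow cf n b (hf := hcf_cont.continuousOn)]

end Adjointable

/-- For an adjointable operator T with adjoint S between Hilbert C*-modules, the closure
of the range of S equals the closure of the range of S ∘ T. -/
theorem closure_range_adjoint_eq (T : E →L[ℂ] F) (S : F →L[ℂ] E)
    (hS : ∀ (x : E) (y : F), ⟪T x, y⟫ = ⟪x, S y⟫) :
    closure (Set.range S) = closure (Set.range (S.comp T)) := by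
  have hS' : ∀ (y : F) (x : E), ⟪y, T x⟫ = ⟪S y, x⟫ := fun y x => by
    rw [← RightCStarModule.star_inner, hS, RightCStarModule.star_inner]
  apply Set.Subset.antisymm
  · apply closure_minimal ?_ isClosed_closure
    rintro _ ⟨y, rfl⟩
    set b : Adjointable A F := ⟨T ∘L S, T ∘L S, fun v w => by
      simp only [ContinuousLinearMap.comp_apply]
      rw [hS, hS']⟩ with hbdef
    have hb_sa : IsSelfAdjoint b := Adjointable.ext rfl rfl
    have hb_pos : ∀ v : F, 0 ≤ ⟪v, b.toL v⟫ := fun v => by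
      have h : b.toL v = T (S v) := rfl
      rw [h, hS' v (S v)]
      exact RightCStarModule.inner_self_nonneg
    set M : ℝ := ‖b‖ + 1 with hMdef
    have hM0 : 0 < M := by positivity
    set c : Adjointable A F := cfc (fun t : ℝ => 1 - M⁻¹ * t) b with hcdef
    rw [Metric.mem_closure_iff]
    intro ε hε
    obtain ⟨n, hn⟩ := exists_nat_gt (‖y‖^2 * M / ε^2)
    set en : Adjointable A F :=
      cfc (fun t : ℝ => M⁻¹ * (∑ k ∈ Finset.range n, (1 - M⁻¹ * t)^k)) b with hendef
    have hgeom : 1 - c^n = b * en := Adjointable.one_sub_pow_eq b hb_sa n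
    refine ⟨(S.comp T) (S (en.toL y)), ⟨S (en.toL y), rfl⟩, ?_⟩
    have hz : (S.comp T) (S (en.toL y)) = S ((b * en).toL y) := rfl
    have hsub : S y - S ((b * en).toL y) = S ((c^n).toL y) := by
      rw [← map_sub]
      congr 1
      have h1 : (1 - b * en).toL y = y - (b * en).toL y := by
        rw [Adjointable.sub_toL, ContinuousLinearMap.sub_apply, Adjointable.one_toL,
          ContinuousLinearMap.one_apply]
      rw [← h1, ← hgeom, sub_sub_cancel]
    rw [dist_eq_norm, hz, hsub]
    set w : F := (c^n).toL y with hwdef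
    have hc_sa : IsSelfAdjoint c := cfc_predicate _ b
    have hcn_sa : IsSelfAdjoint (c^n) := hc_sa.pow n
    have key : ‖S w‖^2 ≤ ‖y‖^2 * (M / ((n:ℝ)+1)) := by
      have e1 : ‖S w‖^2 = ‖⟪S w, S w⟫‖ := RightCStarModule.norm_sq_eq
      have e2 : ⟪S w, S w⟫ = ⟪y, (c^n * b * c^n).toL y⟫ := by
        rw [← hS' w (S w)]
        have h2 : T (S w) = (b * c^n).toL y := rfl
        rw [h2]
        calc ⟪w, (b * c^n).toL y⟫ = ⟪y, (c^n * (b * c^n)).toL y⟫ :=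
              Adjointable.isAdj_self hcn_sa y _
          _ = ⟪y, (c^n * b * c^n).toL y⟫ := by rw [mul_assoc]
      have e4 : ‖⟪y, (c^n * b * c^n).toL y⟫‖ ≤ ‖y‖ * ‖(c^n * b * c^n).toL y‖ :=
        RightCStarModule.norm_inner_le F
      have e5 : ‖(c^n * b * c^n).toL y‖ ≤ (M / ((n:ℝ)+1)) * ‖y‖ := by
        calc ‖(c^n * b * c^n).toL y‖ ≤ ‖(c^n * b * c^n).toL‖ * ‖y‖ :=
              (c^n * b * c^n).toL.le_opNorm y
          _ ≤ ‖c^n * b * c^n‖ * ‖y‖ := by gcongr; exact Adjointable.norm_toL_le _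
          _ ≤ (M / ((n:ℝ)+1)) * ‖y‖ := by
              gcongr
              exact Adjointable.norm_sandwich_le b hb_sa hb_pos n
      calc ‖S w‖^2 = ‖⟪y, (c^n * b * c^n).toL y⟫‖ := by rw [e1, e2]
        _ ≤ ‖y‖ * ((M / ((n:ℝ)+1)) * ‖y‖) := e4.trans (by gcongr)
        _ = ‖y‖^2 * (M / ((n:ℝ)+1)) := by ring
    have hlt : ‖y‖^2 * (M / ((n:ℝ)+1)) < ε^2 := by
      have hε2 : (0:ℝ) < ε^2 := by positivity
      have h7 : ‖y‖^2 * M < ((n:ℝ)+1) * ε^2 := by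
        have h8 : ‖y‖^2 * M < (n:ℝ) * ε^2 := by
          have := (div_lt_iff₀ hε2).mp hn
          linarith
        nlinarith
      calc ‖y‖^2 * (M / ((n:ℝ)+1)) = (‖y‖^2 * M) / ((n:ℝ)+1) := by ring
        _ < ε^2 := by
          rw [div_lt_iff₀ (by positivity : (0:ℝ) < (n:ℝ)+1)]
          linarith
    have hfin : ‖S w‖^2 < ε^2 := lt_of_le_of_lt key hlt
    exact lt_of_pow_lt_pow_left₀ 2 hε.le hfin
  · exact closure_mono (by rintro _ ⟨x, rfl⟩; exact ⟨T x, rfl⟩)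

end
end

section
/- Let A be a C*-algebra, let E and F be Hilbert A-modules, and let u : E → F be a continuous linear map with adjoint v : F → E which is a partial isometry, i.e. u ∘ v ∘ u = u. Then the range of u is closed, the range of v is closed, and there are orthogonal direct sum decompositions E = ker u ⊕ v(F) and F = ker v ⊕ u(E): every x ∈ E is uniquely x = x₁ + x₂ with u x₁ = 0 and x₂ ∈ v(F), with ⟪x₁, x₂⟫ = 0, and symmetrically for F. -/
open scoped RightActions

variable {A : Type*} [CStarAlgebra A] [PartialOrder A] [StarOrderedRing A]
variable {E : Type*} [NormedAddCommGroup E] [NormedSpace ℂ E] [SMul Aᵐᵒᵖ E]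
  [CStarModuleRight A E] [CompleteSpace E]
variable {F : Type*} [NormedAddCommGroup F] [NormedSpace ℂ F] [SMul Aᵐᵒᵖ F]
  [CStarModuleRight A F] [CompleteSpace F]

local notation "⟪" x ", " y "⟫" => inner (𝕜 := A) x y

lemma CStarModuleRight.inner_zero_right {x : E} : ⟪x, (0:E)⟫ = 0 := by
  have h := CStarModuleRight.inner_add_right (A := A) (x := x) (y := (0:E)) (z := 0)
  rw [add_zero] at h
  calc ⟪x, (0:E)⟫ = ⟪x, (0:E)⟫ + ⟪x, (0:E)⟫ - ⟪x, (0:E)⟫ := by abel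
  _ = 0 := by rw [← h, sub_self]

lemma CStarModuleRight.inner_neg_right {x y : E} : ⟪x, -y⟫ = -⟪x, y⟫ := by
  have h := CStarModuleRight.inner_add_right (A := A) (x := x) (y := y) (z := -y)
  rw [add_neg_cancel, CStarModuleRight.inner_zero_right] at h
  calc ⟪x, -y⟫ = (⟪x, y⟫ + ⟪x, -y⟫) - ⟪x, y⟫ := by abel
  _ = -⟪x, y⟫ := by rw [← h]; abel

lemma CStarModuleRight.inner_sub_right {x y z : E} : ⟪x, y - z⟫ = ⟪x, y⟫ - ⟪x, z⟫ := by
  rw [sub_eq_add_neg, CStarModuleRight.inner_add_right, CStarModuleRight.inner_neg_right,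
    ← sub_eq_add_neg]

lemma CStarModuleRight.inner_sub_left {x y z : E} : ⟪x - y, z⟫ = ⟪x, z⟫ - ⟪y, z⟫ := by
  rw [← CStarModuleRight.star_inner (A := A) z (x - y), CStarModuleRight.inner_sub_right,
    star_sub, CStarModuleRight.star_inner, CStarModuleRight.star_inner]

lemma CStarModuleRight.inner_zero_left {x : E} : ⟪(0:E), x⟫ = 0 := by
  rw [← CStarModuleRight.star_inner (A := A) x 0, CStarModuleRight.inner_zero_right, star_zero]

lemma aux_eq_zero_of_inner_self {x : E} (h : ⟪x, x⟫ = 0) : x = 0 := by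
  have : ‖x‖ = 0 := by
    rw [CStarModuleRight.norm_eq_sqrt_norm_inner_self (A := A), h, norm_zero, Real.sqrt_zero]
  simpa using this

/-- A partial isometry u between Hilbert C*-modules has closed range, its adjoint v has
closed range, and E = ker u ⊕ v(F), F = ker v ⊕ u(E) as orthogonal direct sums. -/
theorem partial_isometry_decomposition (u : E →L[ℂ] F) (v : F →L[ℂ] E)
    (hv : ∀ (x : E) (y : F), ⟪u x, y⟫ = ⟪x, v y⟫)
    (hpi : ∀ x : E, u (v (u x)) = u x) :
    IsClosed (Set.range u) ∧ IsClosed (Set.range v) ∧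
    (∀ x : E, ∃! p : E × E, x = p.1 + p.2 ∧ u p.1 = 0 ∧ p.2 ∈ Set.range v) ∧
    (∀ x₁ x₂ : E, u x₁ = 0 → x₂ ∈ Set.range v → ⟪x₁, x₂⟫ = 0) ∧
    (∀ y : F, ∃! q : F × F, y = q.1 + q.2 ∧ v q.1 = 0 ∧ q.2 ∈ Set.range u) ∧
    (∀ y₁ y₂ : F, v y₁ = 0 → y₂ ∈ Set.range u → ⟪y₁, y₂⟫ = 0) := by
  -- the adjoint relation in the other order
  have hv' : ∀ (y : F) (x : E), ⟪v y, x⟫ = ⟪y, u x⟫ := by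
    intro y x
    calc ⟪v y, x⟫ = star ⟪x, v y⟫ := (CStarModuleRight.star_inner x (v y)).symm
    _ = star ⟪u x, y⟫ := by rw [hv]
    _ = ⟪y, u x⟫ := CStarModuleRight.star_inner _ _
  -- inner products of images of v
  have hvv : ∀ y z : F, ⟪v y, v z⟫ = ⟪y, u (v z)⟫ := fun y z => hv' y (v z)
  -- v ∘ u ∘ v = v
  have hpi' : ∀ y : F, v (u (v y)) = v y := by
    intro y
    have key : ⟪v (u (v y)) - v y, v (u (v y)) - v y⟫ = 0 := by
      simp only [CStarModuleRight.inner_sub_left, CStarModuleRight.inner_sub_right, hvv]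
      rw [hpi (v y)]
      abel
    have := aux_eq_zero_of_inner_self key
    rwa [sub_eq_zero] at this
  -- ranges as fixed point sets
  have hRu : Set.range u = {y : F | u (v y) = y} := by
    ext y
    constructor
    · rintro ⟨x, rfl⟩; exact hpi x
    · intro h; exact ⟨v y, h⟩
  have hRv : Set.range v = {x : E | v (u x) = x} := by
    ext x
    constructor
    · rintro ⟨y, rfl⟩; exact hpi' y
    · intro h; exact ⟨u x, h⟩
  have hcu : IsClosed (Set.range u) := by
    rw [hRu]
    have : {y : F | u (v y) = y} = {y : F | u (v y) - y = 0} := by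
      ext y; simp [sub_eq_zero]
    rw [this]
    exact isClosed_eq (by continuity) continuous_const
  have hcv : IsClosed (Set.range v) := by
    rw [hRv]
    have : {x : E | v (u x) = x} = {x : E | v (u x) - x = 0} := by
      ext x; simp [sub_eq_zero]
    rw [this]
    exact isClosed_eq (by continuity) continuous_const
  refine ⟨hcu, hcv, ?_, ?_, ?_, ?_⟩
  · -- decomposition of E
    intro x
    refine ⟨(x - v (u x), v (u x)), ⟨(sub_add_cancel x _).symm, by simp [map_sub, hpi], ⟨u x, rfl⟩⟩, ?_⟩
    rintro ⟨x₁, x₂⟩ ⟨hsum, hx₁, y, hy⟩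
    dsimp only at hsum hx₁ hy
    have h2 : v (u x) = x₂ := by
      rw [hsum, map_add, map_add, hx₁, map_zero, zero_add, ← hy, hpi' y]
    simp only [Prod.mk.injEq]
    exact ⟨by rw [h2, hsum]; abel, h2.symm⟩
  · -- orthogonality in E
    rintro x₁ x₂ h1 ⟨y, rfl⟩
    rw [← hv, h1, CStarModuleRight.inner_zero_left]
  · -- decomposition of F
    intro y
    refine ⟨(y - u (v y), u (v y)), ⟨(sub_add_cancel y _).symm, by simp [map_sub, hpi'], ⟨v y, rfl⟩⟩, ?_⟩
    rintro ⟨y₁, y₂⟩ ⟨hsum, hy₁, x, hx⟩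
    dsimp only at hsum hy₁ hx
    have h2 : u (v y) = y₂ := by
      rw [hsum, map_add, map_add, hy₁, map_zero, zero_add, ← hx, hpi x]
    simp only [Prod.mk.injEq]
    exact ⟨by rw [h2, hsum]; abel, h2.symm⟩
  · -- orthogonality in F
    rintro y₁ y₂ h1 ⟨x, rfl⟩
    rw [← CStarModuleRight.star_inner, hv, h1, CStarModuleRight.inner_zero_right, star_zero]
end

section
/- Let A be a C*-algebra and E a Hilbert A-module. For every x ∈ E there exists a unique y ∈ E such that x = y · ⟪y, y⟫ (the module action of the element ⟪y,y⟫ ∈ A on y). (The element y is obtained as the limit of x · fₙ(√⟪x,x⟫) with fₙ(t) = t^{1/3}(1/n + t)^{-1}.) -/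
open scoped RightActions

variable {A : Type*} [CStarAlgebra A] [PartialOrder A] [StarOrderedRing A]
variable {E : Type*} [NormedAddCommGroup E] [NormedSpace ℂ E] [SMul Aᵐᵒᵖ E]
  [CStarModuleRight A E] [CompleteSpace E]

local notation "⟪" x ", " y "⟫" => inner (𝕜 := A) x y

namespace CStarModuleRight

lemma inner_add_left {x y z : E} : ⟪x + y, z⟫ = ⟪x, z⟫ + ⟪y, z⟫ := by
  rw [← star_inner (A := A) z (x + y), inner_add_right, star_add, star_inner, star_inner]

lemma inner_op_smul_left {a : A} {x y : E} : ⟪x <• a, y⟫ = star a * ⟪x, y⟫ := by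
  rw [← star_inner (A := A) y (x <• a), inner_op_smul_right, star_mul, star_inner]

lemma inner_sub_right_s16 {x y z : E} : ⟪x, y - z⟫ = ⟪x, y⟫ - ⟪x, z⟫ :=
  map_sub (AddMonoidHom.mk' (fun w : E => ⟪x, w⟫) (fun _ _ => inner_add_right)) y z

lemma inner_zero_right_s16 {x : E} : ⟪x, 0⟫ = 0 :=
  map_zero (AddMonoidHom.mk' (fun w : E => ⟪x, w⟫) (fun _ _ => inner_add_right))

lemma inner_sub_left_s16 {x y z : E} : ⟪x - y, z⟫ = ⟪x, z⟫ - ⟪y, z⟫ := by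
  rw [← star_inner (A := A) z (x - y), inner_sub_right_s16, star_sub, star_inner, star_inner]

lemma inner_zero_left_s16 {x : E} : ⟪0, x⟫ = 0 := by
  rw [← star_inner (A := A) x 0, inner_zero_right_s16, star_zero]

lemma norm_sq_eq {x : E} : ‖x‖ ^ 2 = ‖⟪x, x⟫‖ := by
  rw [norm_eq_sqrt_norm_inner_self (A := A) x, Real.sq_sqrt (norm_nonneg _)]

lemma inner_smul_right_real {r : ℝ} {x y : E} : ⟪x, r • y⟫ = r • ⟪x, y⟫ := by
  have h1 : r • y = (r : ℂ) • y := by simp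
  rw [h1, inner_smul_right_complex]
  simp

lemma inner_smul_left_real {r : ℝ} {x y : E} : ⟪r • x, y⟫ = r • ⟪x, y⟫ := by
  rw [← star_inner (A := A) y (r • x), inner_smul_right_real, star_smul, star_trivial, star_inner]

lemma inner_swap_mul_le {x y : E} : ⟪y, x⟫ * ⟪x, y⟫ ≤ ‖x‖ ^ 2 • ⟪y, y⟫ := by
  rcases eq_or_ne x 0 with h | h
  · subst h
    rw [inner_zero_right_s16, inner_zero_left_s16, norm_zero]
    simp
  · have hx : 0 < ‖x‖ := norm_pos_iff.mpr h
    have h₁ : ∀ a : A, (0 : A) ≤ ‖x‖ ^ 2 • (star a * a) - ‖x‖ ^ 2 • (star a * ⟪x, y⟫)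
        - ‖x‖ ^ 2 • (⟪y, x⟫ * a) + ‖x‖ ^ 2 • (‖x‖ ^ 2 • ⟪y, y⟫) := fun a => by
      calc (0 : A) ≤ ⟪x <• a - ‖x‖ ^ 2 • y, x <• a - ‖x‖ ^ 2 • y⟫ := inner_self_nonneg
        _ = star a * ⟪x, x⟫ * a - ‖x‖ ^ 2 • (star a * ⟪x, y⟫)
            - ‖x‖ ^ 2 • (⟪y, x⟫ * a) + ‖x‖ ^ 2 • (‖x‖ ^ 2 • ⟪y, y⟫) := by
          simp only [inner_sub_right_s16, inner_op_smul_right, inner_sub_left_s16, inner_op_smul_left,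
            inner_smul_left_real, inner_smul_right_real, mul_smul_comm, smul_mul_assoc,
            smul_sub, sub_mul, mul_sub, mul_assoc]
          abel
        _ ≤ ‖x‖ ^ 2 • (star a * a) - ‖x‖ ^ 2 • (star a * ⟪x, y⟫)
            - ‖x‖ ^ 2 • (⟪y, x⟫ * a) + ‖x‖ ^ 2 • (‖x‖ ^ 2 • ⟪y, y⟫) := by
          gcongr
          calc star a * ⟪x, x⟫ * a ≤ ‖⟪x, x⟫‖ • (star a * a) :=
                CStarAlgebra.star_left_conjugate_le_norm_smul (star_inner (A := A) x x)
            _ = ‖x‖ ^ 2 • (star a * a) := by rw [norm_sq_eq (A := A) (x := x)]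
    specialize h₁ ⟪x, y⟫
    simp only [star_inner, sub_self, zero_sub, le_neg_add_iff_add_le, add_zero] at h₁
    rwa [smul_le_smul_iff_of_pos_left (pow_pos hx _)] at h₁

lemma norm_inner_le {x y : E} : ‖⟪x, y⟫‖ ≤ ‖x‖ * ‖y‖ := by
  have := calc ‖⟪x, y⟫‖ ^ 2 = ‖⟪y, x⟫ * ⟪x, y⟫‖ := by
                rw [← star_inner (A := A) x y, CStarRing.norm_star_mul_self, pow_two]
    _ ≤ ‖‖x‖ ^ 2 • ⟪y, y⟫‖ := by
                refine CStarAlgebra.norm_le_norm_of_nonneg_of_le ?_ inner_swap_mul_le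
                rw [← star_inner (A := A) x y]
                exact star_mul_self_nonneg _
    _ = ‖x‖ ^ 2 * ‖⟪y, y⟫‖ := by simp [norm_smul]
    _ = ‖x‖ ^ 2 * ‖y‖ ^ 2 := by rw [norm_sq_eq (A := A) (x := y)]
    _ = (‖x‖ * ‖y‖) ^ 2 := by ring
  exact (pow_le_pow_iff_left₀ (norm_nonneg _) (by positivity) (by norm_num)).mp this

lemma continuous_inner : Continuous (fun p : E × E => ⟪p.1, p.2⟫) := by
  let f : E →ₗ[ℝ] E →ₗ[ℝ] A := LinearMap.mk₂ ℝ (fun x y => ⟪x, y⟫)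
    (fun _ _ _ => inner_add_left) (fun _ _ _ => inner_smul_left_real)
    (fun _ _ _ => inner_add_right) (fun _ _ _ => inner_smul_right_real)
  exact (LinearMap.mkContinuous₂ f 1 (fun x y => by
    rw [one_mul]; exact norm_inner_le)).continuous₂

end CStarModuleRight

namespace CubeRootAux

open Real

noncomputable def φ (ε t : ℝ) : ℝ := t ^ (1/6 : ℝ) * (ε + t ^ (1/2 : ℝ))⁻¹

lemma denom_pos {ε t : ℝ} (hε : 0 < ε) (ht : 0 ≤ t) : 0 < ε + t ^ (1/2 : ℝ) :=
  lt_of_lt_of_le hε (le_add_of_nonneg_right (rpow_nonneg ht _))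

lemma key0 {ε t : ℝ} (hε : 0 < ε) (ht : 0 ≤ t) :
    t ^ (1/6:ℝ) * (ε * (ε + t ^ (1/2:ℝ))⁻¹) ≤ ε ^ (1/3:ℝ) := by
  have hd := denom_pos hε ht
  rcases le_or_gt t (ε^2) with h | h
  · have h1 : t ^ (1/6:ℝ) ≤ ε ^ (1/3:ℝ) := by
      have he : ε ^ (1/3:ℝ) = (ε^2) ^ (1/6:ℝ) := by
        rw [← rpow_natCast ε 2, ← rpow_mul hε.le]
        norm_num
      rw [he]
      exact rpow_le_rpow ht h (by norm_num)
    calc t ^ (1/6:ℝ) * (ε * (ε + t ^ (1/2:ℝ))⁻¹)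
        ≤ ε ^ (1/3:ℝ) * 1 := by
          apply mul_le_mul h1 ?_ (by positivity) (rpow_nonneg hε.le _)
          rw [← div_eq_mul_inv, div_le_one hd]
          exact le_add_of_nonneg_right (rpow_nonneg ht _)
      _ = ε ^ (1/3:ℝ) := mul_one _
  · have ht' : 0 < t := lt_of_le_of_lt (sq_nonneg ε) h
    have hst : ε ≤ t ^ (1/2:ℝ) := by
      have : ε = (ε^2) ^ (1/2:ℝ) := by
        rw [← rpow_natCast ε 2, ← rpow_mul hε.le]; norm_num
      rw [this]
      exact rpow_le_rpow (sq_nonneg ε) h.le (by norm_num)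
    have heq : t ^ (1/6:ℝ) * (ε * (ε + t ^ (1/2:ℝ))⁻¹)
        = (t ^ (1/6:ℝ) * ε) / (ε + t ^ (1/2:ℝ)) := by ring
    rw [heq, div_le_iff₀ hd]
    have h2 : ε ^ ((2:ℝ)/3) ≤ t ^ ((1:ℝ)/3) := by
      have : ε ^ ((2:ℝ)/3) = (ε^2) ^ ((1:ℝ)/3) := by
        rw [← rpow_natCast ε 2, ← rpow_mul hε.le]; norm_num
      rw [this]
      exact rpow_le_rpow (sq_nonneg ε) h.le (by norm_num)
    have hεe : ε ^ (1/3:ℝ) * ε ^ ((2:ℝ)/3) = ε := by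
      rw [← rpow_add hε]; norm_num
    calc t ^ (1/6:ℝ) * ε = ε ^ (1/3:ℝ) * (t ^ (1/6:ℝ) * ε ^ ((2:ℝ)/3)) := by
          linear_combination (-(t ^ (1/6:ℝ))) * hεe
      _ ≤ ε ^ (1/3:ℝ) * (t ^ (1/6:ℝ) * t ^ ((1:ℝ)/3)) :=
          mul_le_mul_of_nonneg_left
            (mul_le_mul_of_nonneg_left h2 (rpow_nonneg ht _)) (rpow_nonneg hε.le _)
      _ = ε ^ (1/3:ℝ) * t ^ (1/2:ℝ) := by
          rw [← rpow_add ht']; norm_num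
      _ ≤ ε ^ (1/3:ℝ) * (ε + t ^ (1/2:ℝ)) :=
          mul_le_mul_of_nonneg_left (le_add_of_nonneg_left hε.le) (rpow_nonneg hε.le _)

lemma rpow_half_mul {t : ℝ} (ht : 0 ≤ t) : t ^ (1/2:ℝ) * t ^ (1/2:ℝ) = t := by
  rw [← rpow_add' ht (by norm_num : (1:ℝ)/2 + 1/2 ≠ 0)]; norm_num

lemma rpow_sixth_mul {t : ℝ} (ht : 0 ≤ t) : t ^ (1/6:ℝ) * t ^ (1/6:ℝ) = t ^ (1/3:ℝ) := by
  rw [← rpow_add' ht (by norm_num : (1:ℝ)/6 + 1/6 ≠ 0)]; norm_num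

lemma rpow_half_mul_sixth {t : ℝ} (ht : 0 ≤ t) :
    t ^ (1/2:ℝ) * t ^ (1/6:ℝ) = t ^ ((2:ℝ)/3) := by
  rw [← rpow_add' ht (by norm_num : (1:ℝ)/2 + 1/6 ≠ 0)]; norm_num

lemma φ_nonneg {ε t : ℝ} (hε : 0 < ε) (ht : 0 ≤ t) : 0 ≤ φ ε t := by
  have := denom_pos hε ht
  unfold φ; positivity

lemma sqrtφ_le {ε t : ℝ} (hε : 0 < ε) (ht : 0 ≤ t) :
    t ^ (1/2:ℝ) * φ ε t ≤ t ^ (1/6:ℝ) := by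
  have hd := denom_pos hε ht
  unfold φ
  have h1 : t ^ (1/2:ℝ) * (ε + t ^ (1/2:ℝ))⁻¹ ≤ 1 := by
    rw [← div_eq_mul_inv, div_le_one hd]
    exact le_add_of_nonneg_left hε.le
  calc t ^ (1/2:ℝ) * (t ^ (1/6:ℝ) * (ε + t ^ (1/2:ℝ))⁻¹)
      = t ^ (1/6:ℝ) * (t ^ (1/2:ℝ) * (ε + t ^ (1/2:ℝ))⁻¹) := by ring
    _ ≤ t ^ (1/6:ℝ) * 1 := mul_le_mul_of_nonneg_left h1 (rpow_nonneg ht _)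
    _ = t ^ (1/6:ℝ) := mul_one _

lemma sqrtφ_ge {ε t : ℝ} (hε : 0 < ε) (ht : 0 ≤ t) :
    t ^ (1/6:ℝ) - ε ^ (1/3:ℝ) ≤ t ^ (1/2:ℝ) * φ ε t := by
  have hd := denom_pos hε ht
  have heq : t ^ (1/6:ℝ) - t ^ (1/2:ℝ) * φ ε t
      = t ^ (1/6:ℝ) * (ε * (ε + t ^ (1/2:ℝ))⁻¹) := by
    unfold φ
    field_simp
    ring
  have := key0 hε ht
  linarith [this, heq.symm.le, heq.le]

lemma estB1 {ε δ t : ℝ} (hε : 0 < ε) (hδ : 0 < δ) (ht : 0 ≤ t) :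
    |t * (φ ε t - φ δ t) ^ 2| ≤ (ε ^ (1/3:ℝ) + δ ^ (1/3:ℝ)) ^ 2 := by
  have heq : t * (φ ε t - φ δ t) ^ 2
      = (t ^ (1/2:ℝ) * φ ε t - t ^ (1/2:ℝ) * φ δ t) ^ 2 := by
    linear_combination (-(φ ε t - φ δ t)^2) * rpow_half_mul ht
  rw [heq, abs_of_nonneg (sq_nonneg _)]
  have h1 := sqrtφ_le hε ht
  have h2 := sqrtφ_le hδ ht
  have h3 := sqrtφ_ge hε ht
  have h4 := sqrtφ_ge hδ ht
  have h5 : (0:ℝ) ≤ ε ^ (1/3:ℝ) := rpow_nonneg hε.le _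
  have h6 : (0:ℝ) ≤ δ ^ (1/3:ℝ) := rpow_nonneg hδ.le _
  apply sq_le_sq'
  · linarith
  · linarith

lemma estB2 {ε t R : ℝ} (hε : 0 < ε) (ht : 0 ≤ t) (htR : t ≤ R) :
    |t * φ ε t - t ^ ((2:ℝ)/3)| ≤ R ^ (1/2:ℝ) * ε ^ (1/3:ℝ) := by
  have heq : t * φ ε t - t ^ ((2:ℝ)/3)
      = t ^ (1/2:ℝ) * (t ^ (1/2:ℝ) * φ ε t - t ^ (1/6:ℝ)) := by
    linear_combination (-(φ ε t)) * rpow_half_mul ht + rpow_half_mul_sixth ht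
  rw [heq, abs_mul, abs_of_nonneg (rpow_nonneg ht _)]
  have h1 := sqrtφ_le hε ht
  have h2 := sqrtφ_ge hε ht
  have h5 : (0:ℝ) ≤ ε ^ (1/3:ℝ) := rpow_nonneg hε.le _
  have habs : |t ^ (1/2:ℝ) * φ ε t - t ^ (1/6:ℝ)| ≤ ε ^ (1/3:ℝ) := by
    rw [abs_le]; constructor <;> linarith
  have hR : t ^ (1/2:ℝ) ≤ R ^ (1/2:ℝ) := rpow_le_rpow ht htR (by norm_num)
  calc t ^ (1/2:ℝ) * |t ^ (1/2:ℝ) * φ ε t - t ^ (1/6:ℝ)|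
      ≤ R ^ (1/2:ℝ) * ε ^ (1/3:ℝ) :=
        mul_le_mul hR habs (abs_nonneg _) (le_trans (rpow_nonneg ht _) hR)

lemma estB3 {ε t R : ℝ} (hε : 0 < ε) (ht : 0 ≤ t) (htR : t ≤ R) :
    |t * (φ ε t * φ ε t) - t ^ (1/3:ℝ)| ≤ 2 * R ^ (1/6:ℝ) * ε ^ (1/3:ℝ) := by
  have heq : t * (φ ε t * φ ε t) - t ^ (1/3:ℝ)
      = (t ^ (1/2:ℝ) * φ ε t - t ^ (1/6:ℝ)) * (t ^ (1/2:ℝ) * φ ε t + t ^ (1/6:ℝ)) := by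
    linear_combination (-(φ ε t * φ ε t)) * rpow_half_mul ht + rpow_sixth_mul ht
  rw [heq, abs_mul]
  have h1 := sqrtφ_le hε ht
  have h2 := sqrtφ_ge hε ht
  have h0 : 0 ≤ t ^ (1/2:ℝ) * φ ε t := mul_nonneg (rpow_nonneg ht _) (φ_nonneg hε ht)
  have h5 : (0:ℝ) ≤ ε ^ (1/3:ℝ) := rpow_nonneg hε.le _
  have hR : t ^ (1/6:ℝ) ≤ R ^ (1/6:ℝ) := rpow_le_rpow ht htR (by norm_num)
  have habs : |t ^ (1/2:ℝ) * φ ε t - t ^ (1/6:ℝ)| ≤ ε ^ (1/3:ℝ) := by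
    rw [abs_le]; constructor <;> linarith
  have habs2 : |t ^ (1/2:ℝ) * φ ε t + t ^ (1/6:ℝ)| ≤ 2 * R ^ (1/6:ℝ) := by
    rw [abs_le]; constructor <;> linarith
  calc |t ^ (1/2:ℝ) * φ ε t - t ^ (1/6:ℝ)| * |t ^ (1/2:ℝ) * φ ε t + t ^ (1/6:ℝ)|
      ≤ ε ^ (1/3:ℝ) * (2 * R ^ (1/6:ℝ)) :=
        mul_le_mul habs habs2 (abs_nonneg _) h5
    _ = 2 * R ^ (1/6:ℝ) * ε ^ (1/3:ℝ) := by ring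

lemma contφ {ε : ℝ} (hε : 0 < ε) : ContinuousOn (φ ε) (Set.Ici 0) := by
  apply ContinuousOn.fun_mul ((continuous_rpow_const (by norm_num)).continuousOn)
  apply ContinuousOn.inv₀
    ((continuous_const.add (continuous_rpow_const (by norm_num))).continuousOn)
  intro t ht
  exact (denom_pos hε ht).ne'

lemma cube_eq {u v : A} (hu : 0 ≤ u) (hv : 0 ≤ v) (h : u * (u * u) = v * (v * v)) :
    u = v := by
  have key : ∀ w : A, 0 ≤ w → cfc (fun t : ℝ => t ^ (1/3:ℝ)) (w * (w * w)) = w := by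
    intro w hw
    have hws : IsSelfAdjoint w := .of_nonneg hw
    have hcube : w * (w * w) = cfc (fun t : ℝ => t * (t * t)) w := by
      rw [cfc_mul _ _ w (continuousOn_id' _) ((continuousOn_id' _).fun_mul (continuousOn_id' _)),
        cfc_mul _ _ w (continuousOn_id' _) (continuousOn_id' _), cfc_id' ℝ w]
    rw [hcube, ← cfc_comp (fun t : ℝ => t ^ (1/3:ℝ)) (fun t : ℝ => t * (t * t)) w hws
      ((continuous_rpow_const (by norm_num)).continuousOn)
      ((continuousOn_id' _).fun_mul ((continuousOn_id' _).fun_mul (continuousOn_id' _)))]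
    have : (spectrum ℝ w).EqOn ((fun t : ℝ => t ^ (1/3:ℝ)) ∘ (fun t : ℝ => t * (t * t)))
        (id : ℝ → ℝ) := by
      intro t htσ
      have ht : 0 ≤ t := spectrum_nonneg_of_nonneg hw htσ
      simp only [Function.comp_apply, id_eq]
      rw [show t * (t * t) = t ^ (3:ℕ) by ring, ← rpow_natCast t 3, ← rpow_mul ht]
      norm_num
    rw [cfc_congr this, cfc_id ℝ w]
  rw [← key u hu, ← key v hv, h]

variable (x : E)

lemma inner_smul_smul (c d : A) : ⟪x <• c, x <• d⟫ = star c * (⟪x, x⟫ * d) := by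
  rw [CStarModuleRight.inner_op_smul_left, CStarModuleRight.inner_op_smul_right]

lemma mul_cfc_mul {f g : ℝ → ℝ} {a : A} (ha : IsSelfAdjoint a)
    (hf : ContinuousOn f (spectrum ℝ a)) (hg : ContinuousOn g (spectrum ℝ a)) :
    cfc f a * (a * cfc g a) = cfc (fun t : ℝ => f t * (t * g t)) a := by
  have h1 : cfc (fun t : ℝ => t * g t) a = a * cfc g a := by
    rw [cfc_mul _ _ a (continuousOn_id' _) hg, cfc_id' ℝ a]
  rw [cfc_mul _ _ a hf ((continuousOn_id' _).fun_mul hg), h1]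

lemma inner_smul_cfc {f g : ℝ → ℝ} (ha : IsSelfAdjoint ⟪x, x⟫)
    (hf : ContinuousOn f (spectrum ℝ ⟪x, x⟫)) (hg : ContinuousOn g (spectrum ℝ ⟪x, x⟫)) :
    ⟪x <• cfc f ⟪x, x⟫, x <• cfc g ⟪x, x⟫⟫ = cfc (fun t : ℝ => f t * (t * g t)) ⟪x, x⟫ := by
  rw [inner_smul_smul, (cfc_predicate f ⟪x, x⟫ : IsSelfAdjoint _).star_eq,
    mul_cfc_mul ha hf hg]

lemma inner_self_smul_cfc {g : ℝ → ℝ} (ha : IsSelfAdjoint ⟪x, x⟫)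
    (hg : ContinuousOn g (spectrum ℝ ⟪x, x⟫)) :
    ⟪x, x <• cfc g ⟪x, x⟫⟫ = cfc (fun t : ℝ => t * g t) ⟪x, x⟫ := by
  rw [CStarModuleRight.inner_op_smul_right, cfc_mul _ _ _ (continuousOn_id' _) hg, cfc_id' ℝ ⟪x, x⟫]

lemma norm_smul_cfc_sub_le {f g : ℝ → ℝ} (ha : IsSelfAdjoint ⟪x, x⟫)
    (hf : ContinuousOn f (spectrum ℝ ⟪x, x⟫)) (hg : ContinuousOn g (spectrum ℝ ⟪x, x⟫))
    {M : ℝ} (hM : 0 ≤ M)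
    (hb : ∀ t ∈ spectrum ℝ ⟪x, x⟫, |t * (f t - g t) ^ 2| ≤ M ^ 2) :
    ‖x <• cfc f ⟪x, x⟫ - x <• cfc g ⟪x, x⟫‖ ≤ M := by
  set a := ⟪x, x⟫ with ha'
  have hin : ⟪x <• cfc f a - x <• cfc g a, x <• cfc f a - x <• cfc g a⟫
      = cfc (fun t : ℝ => t * (f t - g t) ^ 2) a := by
    rw [CStarModuleRight.inner_sub_left_s16, CStarModuleRight.inner_sub_right_s16, CStarModuleRight.inner_sub_right_s16,
      inner_smul_cfc x ha hf hf, inner_smul_cfc x ha hf hg,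
      inner_smul_cfc x ha hg hf, inner_smul_cfc x ha hg hg]
    have hfg : ∀ p q : ℝ → ℝ, ContinuousOn p (spectrum ℝ a) → ContinuousOn q (spectrum ℝ a) →
        ContinuousOn (fun t : ℝ => p t * (t * q t)) (spectrum ℝ a) := fun p q hp hq =>
      hp.mul ((continuousOn_id' _).fun_mul hq)
    rw [← cfc_sub _ _ a (hfg f f hf hf) (hfg f g hf hg),
      ← cfc_sub _ _ a (hfg g f hg hf) (hfg g g hg hg),
      ← cfc_sub _ _ a (((hfg f f hf hf).fun_sub (hfg f g hf hg)))
        (((hfg g f hg hf).fun_sub (hfg g g hg hg)))]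
    exact cfc_congr fun t _ => by ring
  have hsq : ‖x <• cfc f a - x <• cfc g a‖ ^ 2 ≤ M ^ 2 := by
    rw [CStarModuleRight.norm_sq_eq (A := A), hin]
    exact norm_cfc_le (by positivity) fun t htσ => by
      rw [Real.norm_eq_abs]; exact hb t htσ
  exact (pow_le_pow_iff_left₀ (norm_nonneg _) hM (by norm_num)).mp hsq

end CubeRootAux

open CubeRootAux Real in
/-- In a Hilbert C*-module, every element x factors uniquely as x = y · ⟪y, y⟫. -/
theorem exists_unique_cube_root (x : E) :
    ∃! y : E, x = y <• ⟪y, y⟫ := by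
  obtain hA | hA := subsingleton_or_nontrivial A
  · have hE : ∀ u : E, u = 0 := fun u => (CStarModuleRight.inner_self (A := A)).mp (Subsingleton.elim _ _)
    exact ⟨0, (hE x).trans (hE _).symm, fun z _ => hE z⟩
  -- Uniqueness
  have uniq : ∀ y z : E, x = y <• ⟪y, y⟫ → x = z <• ⟪z, z⟫ → y = z := by
    intro y z hy hz
    have hb0 : (0:A) ≤ ⟪y, y⟫ := CStarModuleRight.inner_self_nonneg
    have hc0 : (0:A) ≤ ⟪z, z⟫ := CStarModuleRight.inner_self_nonneg
    have hbs : star ⟪y, y⟫ = ⟪y, y⟫ := (IsSelfAdjoint.of_nonneg hb0).star_eq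
    have hcs : star ⟪z, z⟫ = ⟪z, z⟫ := (IsSelfAdjoint.of_nonneg hc0).star_eq
    have hyyy : ⟪x, x⟫ = ⟪y, y⟫ * (⟪y, y⟫ * ⟪y, y⟫) := by
      rw [hy, inner_smul_smul, hbs]
    have hzzz : ⟪x, x⟫ = ⟪z, z⟫ * (⟪z, z⟫ * ⟪z, z⟫) := by
      rw [hz, inner_smul_smul, hcs]
    have hbc : ⟪y, y⟫ = ⟪z, z⟫ := cube_eq hb0 hc0 (hyyy ▸ hzzz)
    set e : A := ⟪y - z, y - z⟫ with he_def
    have he0 : (0:A) ≤ e := CStarModuleRight.inner_self_nonneg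
    have hes : star e = e := (IsSelfAdjoint.of_nonneg he0).star_eq
    have h1 : e * ⟪y, y⟫ = 0 := by
      have hcalc : e * ⟪y, y⟫ = ⟪y - z, y <• ⟪y, y⟫⟫ - ⟪y - z, z <• ⟪z, z⟫⟫ := by
        rw [CStarModuleRight.inner_op_smul_right, CStarModuleRight.inner_op_smul_right, he_def,
          CStarModuleRight.inner_sub_right_s16, ← hbc, sub_mul]
      rw [hcalc, ← hy, ← hz, sub_self]
    have h1' : ⟪y, y⟫ * e = 0 := by
      have := congrArg star h1
      rwa [star_mul, star_zero, hes, hbs] at this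
    have hpar : e ≤ ⟪y, y⟫ + ⟪y, y⟫ + (⟪z, z⟫ + ⟪z, z⟫) := by
      have hnn : (0:A) ≤ ⟪y + z, y + z⟫ := CStarModuleRight.inner_self_nonneg
      have hsum : e + ⟪y + z, y + z⟫ = ⟪y, y⟫ + ⟪y, y⟫ + (⟪z, z⟫ + ⟪z, z⟫) := by
        rw [he_def]
        simp only [CStarModuleRight.inner_sub_left_s16, CStarModuleRight.inner_sub_right_s16,
          CStarModuleRight.inner_add_left, CStarModuleRight.inner_add_right]
        abel
      calc e ≤ e + ⟪y + z, y + z⟫ := le_add_of_nonneg_right hnn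
        _ = _ := hsum
    have h2 : e * (e * e) ≤ 0 := by
      have hconj := star_left_conjugate_le_conjugate hpar e
      rw [hes] at hconj
      have hz0 : e * (⟪y, y⟫ + ⟪y, y⟫ + (⟪z, z⟫ + ⟪z, z⟫)) * e = 0 := by
        rw [← hbc, mul_add, mul_add, h1]
        simp
      rw [hz0] at hconj
      calc e * (e * e) = e * e * e := by rw [mul_assoc]
        _ ≤ 0 := hconj
    have h3 : (0:A) ≤ e * (e * e) := by
      have := star_left_conjugate_nonneg he0 e
      rwa [hes, mul_assoc] at this
    have he : e = 0 := by
      have hcube : e * (e * e) = (0:A) * ((0:A) * (0:A)) := by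
        rw [le_antisymm h2 h3]; simp
      exact cube_eq he0 le_rfl hcube
    have : y - z = 0 := CStarModuleRight.inner_self.mp he
    exact sub_eq_zero.mp this
  -- Existence
  set a : A := ⟪x, x⟫ with ha_def
  have ha0 : (0:A) ≤ a := CStarModuleRight.inner_self_nonneg
  have haS : IsSelfAdjoint a := .of_nonneg ha0
  have hσ : ∀ t ∈ spectrum ℝ a, (0:ℝ) ≤ t := fun t ht => spectrum_nonneg_of_nonneg ha0 ht
  have hσR : ∀ t ∈ spectrum ℝ a, t ≤ ‖a‖ := fun t ht =>
    (le_abs_self t).trans (spectrum.norm_le_norm_of_mem ht)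
  set ε : ℕ → ℝ := fun n => ((n:ℝ)+1)⁻¹ with hε_def
  have hε : ∀ n, 0 < ε n := fun n => by positivity
  have hεm : ∀ n m : ℕ, n ≤ m → ε m ≤ ε n := fun n m h => by
    apply inv_anti₀ (by positivity)
    have : (n:ℝ) ≤ (m:ℝ) := Nat.cast_le.mpr h
    linarith
  have hεt : Filter.Tendsto (fun n : ℕ => ε n ^ (1/3:ℝ)) Filter.atTop (nhds 0) := by
    have h0 : Filter.Tendsto ε Filter.atTop (nhds 0) := by
      have := tendsto_one_div_add_atTop_nhds_zero_nat (𝕜 := ℝ)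
      simpa [hε_def, one_div] using this
    have := h0.rpow_const (p := (1/3:ℝ)) (Or.inr (by norm_num))
    simpa [zero_rpow (by norm_num : (1/3:ℝ) ≠ 0)] using this
  have contn : ∀ n, ContinuousOn (φ (ε n)) (spectrum ℝ a) := fun n =>
    (contφ (hε n)).mono (fun t ht => hσ t ht)
  set yseq : ℕ → E := fun n => x <• cfc (φ (ε n)) a with hyseq_def
  have cauchy : CauchySeq yseq := by
    apply cauchySeq_of_le_tendsto_0 (b := fun N => 2 * ε N ^ (1/3:ℝ)) ?_ ?_
    · intro n m N hn hm
      rw [dist_eq_norm]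
      have key : ‖yseq n - yseq m‖ ≤ ε n ^ (1/3:ℝ) + ε m ^ (1/3:ℝ) := by
        apply norm_smul_cfc_sub_le x haS (contn n) (contn m)
          (by positivity)
        intro t ht
        exact estB1 (hε n) (hε m) (hσ t ht)
      refine key.trans ?_
      have h1 : ε n ^ (1/3:ℝ) ≤ ε N ^ (1/3:ℝ) :=
        rpow_le_rpow (hε n).le (hεm N n hn) (by norm_num)
      have h2 : ε m ^ (1/3:ℝ) ≤ ε N ^ (1/3:ℝ) :=
        rpow_le_rpow (hε m).le (hεm N m hm) (by norm_num)
      linarith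
    · simpa using hεt.const_mul 2
  obtain ⟨y, hy⟩ := cauchySeq_tendsto_of_complete cauchy
  have c23 : ContinuousOn (fun t : ℝ => t ^ ((2:ℝ)/3)) (spectrum ℝ a) :=
    (continuous_rpow_const (by norm_num)).continuousOn
  have c13 : ContinuousOn (fun t : ℝ => t ^ ((1:ℝ)/3)) (spectrum ℝ a) :=
    (continuous_rpow_const (by norm_num)).continuousOn
  -- identification of ⟪x, y⟫
  have hxy : ⟪x, y⟫ = cfc (fun t : ℝ => t ^ ((2:ℝ)/3)) a := by
    have hlim1 : Filter.Tendsto (fun n => ⟪x, yseq n⟫) Filter.atTop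
        (nhds (cfc (fun t : ℝ => t ^ ((2:ℝ)/3)) a)) := by
      rw [← tendsto_sub_nhds_zero_iff]
      have hbt : Filter.Tendsto (fun n : ℕ => ‖a‖ ^ (1/2:ℝ) * ε n ^ (1/3:ℝ))
          Filter.atTop (nhds 0) := by simpa using hεt.const_mul (‖a‖ ^ (1/2:ℝ))
      refine squeeze_zero_norm (fun n => ?_) hbt
      have heq : ⟪x, yseq n⟫ - cfc (fun t : ℝ => t ^ ((2:ℝ)/3)) a
          = cfc (fun t : ℝ => t * φ (ε n) t - t ^ ((2:ℝ)/3)) a := by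
        rw [hyseq_def]
        rw [inner_self_smul_cfc x haS (contn n),
          cfc_sub _ _ a ((continuousOn_id' _).fun_mul (contn n)) c23]
      rw [heq]
      apply norm_cfc_le (by positivity)
      intro t ht
      rw [Real.norm_eq_abs]
      exact estB2 (hε n) (hσ t ht) (hσR t ht)
    have hlim2 : Filter.Tendsto (fun n => ⟪x, yseq n⟫) Filter.atTop (nhds ⟪x, y⟫) := by
      have hp : Filter.Tendsto (fun n => ((x : E), yseq n)) Filter.atTop (nhds (x, y)) :=
        Filter.Tendsto.prodMk_nhds tendsto_const_nhds hy
      exact (CStarModuleRight.continuous_inner.tendsto (x, y)).comp hp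
    exact tendsto_nhds_unique hlim2 hlim1
  -- identification of ⟪y, y⟫
  have hyy : ⟪y, y⟫ = cfc (fun t : ℝ => t ^ ((1:ℝ)/3)) a := by
    have hlim1 : Filter.Tendsto (fun n => ⟪yseq n, yseq n⟫) Filter.atTop
        (nhds (cfc (fun t : ℝ => t ^ ((1:ℝ)/3)) a)) := by
      rw [← tendsto_sub_nhds_zero_iff]
      have hbt : Filter.Tendsto (fun n : ℕ => 2 * ‖a‖ ^ (1/6:ℝ) * ε n ^ (1/3:ℝ))
          Filter.atTop (nhds 0) := by simpa using hεt.const_mul (2 * ‖a‖ ^ (1/6:ℝ))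
      refine squeeze_zero_norm (fun n => ?_) hbt
      have heq : ⟪yseq n, yseq n⟫ - cfc (fun t : ℝ => t ^ ((1:ℝ)/3)) a
          = cfc (fun t : ℝ => φ (ε n) t * (t * φ (ε n) t) - t ^ ((1:ℝ)/3)) a := by
        rw [hyseq_def]
        rw [inner_smul_cfc x haS (contn n) (contn n),
          cfc_sub _ _ a ((contn n).fun_mul ((continuousOn_id' _).fun_mul (contn n))) c13]
      rw [heq]
      apply norm_cfc_le (by positivity)
      intro t ht
      rw [Real.norm_eq_abs]
      have hre : φ (ε n) t * (t * φ (ε n) t) = t * (φ (ε n) t * φ (ε n) t) := by ring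
      rw [hre]
      exact estB3 (hε n) (hσ t ht) (hσR t ht)
    have hlim2 : Filter.Tendsto (fun n => ⟪yseq n, yseq n⟫) Filter.atTop (nhds ⟪y, y⟫) := by
      have hp : Filter.Tendsto (fun n => (yseq n, yseq n)) Filter.atTop (nhds (y, y)) :=
        Filter.Tendsto.prodMk_nhds hy hy
      exact (CStarModuleRight.continuous_inner.tendsto (y, y)).comp hp
    exact tendsto_nhds_unique hlim2 hlim1
  -- conclusion
  have hmain : x = y <• ⟪y, y⟫ := by
    have hfin : ⟪x - y <• ⟪y, y⟫, x - y <• ⟪y, y⟫⟫ = 0 := by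
      rw [CStarModuleRight.inner_sub_left_s16, CStarModuleRight.inner_sub_right_s16,
        CStarModuleRight.inner_sub_right_s16, CStarModuleRight.inner_op_smul_right,
        CStarModuleRight.inner_op_smul_left, inner_smul_smul, ← CStarModuleRight.star_inner x y,
        hxy, hyy, ← ha_def,
        (cfc_predicate (fun t : ℝ => t ^ ((2:ℝ)/3)) a : IsSelfAdjoint _).star_eq,
        (cfc_predicate (fun t : ℝ => t ^ ((1:ℝ)/3)) a : IsSelfAdjoint _).star_eq]
      rw [show cfc (fun t : ℝ => t ^ ((2:ℝ)/3)) a * cfc (fun t : ℝ => t ^ ((1:ℝ)/3)) a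
          = cfc (fun t : ℝ => t ^ ((2:ℝ)/3) * t ^ ((1:ℝ)/3)) a from (cfc_mul _ _ a c23 c13).symm]
      rw [show cfc (fun t : ℝ => t ^ ((1:ℝ)/3)) a * cfc (fun t : ℝ => t ^ ((2:ℝ)/3)) a
          = cfc (fun t : ℝ => t ^ ((1:ℝ)/3) * t ^ ((2:ℝ)/3)) a from (cfc_mul _ _ a c13 c23).symm]
      rw [show cfc (fun t : ℝ => t ^ ((1:ℝ)/3)) a * (cfc (fun t : ℝ => t ^ ((1:ℝ)/3)) a *
            cfc (fun t : ℝ => t ^ ((1:ℝ)/3)) a)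
          = cfc (fun t : ℝ => t ^ ((1:ℝ)/3) * (t ^ ((1:ℝ)/3) * t ^ ((1:ℝ)/3))) a from by
        rw [cfc_mul _ _ a c13 (c13.fun_mul c13), cfc_mul _ _ a c13 c13]]
      nth_rewrite 1 [← cfc_id' ℝ a]
      rw [← cfc_sub _ _ a (continuousOn_id' _) (c23.fun_mul c13),
        ← cfc_sub _ _ a (c13.fun_mul c23) (c13.fun_mul (c13.fun_mul c13)),
        ← cfc_sub _ _ a ((continuousOn_id' _).fun_sub (c23.fun_mul c13))
          ((c13.fun_mul c23).fun_sub (c13.fun_mul (c13.fun_mul c13)))]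
      have hEq : (spectrum ℝ a).EqOn
          (fun t : ℝ => t - t ^ ((2:ℝ)/3) * t ^ ((1:ℝ)/3) -
            (t ^ ((1:ℝ)/3) * t ^ ((2:ℝ)/3) - t ^ ((1:ℝ)/3) * (t ^ ((1:ℝ)/3) * t ^ ((1:ℝ)/3))))
          (fun _ : ℝ => (0:ℝ)) := by
        intro t htσ
        have ht : (0:ℝ) ≤ t := hσ t htσ
        have e1 : t ^ ((1:ℝ)/3) * t ^ ((1:ℝ)/3) = t ^ ((2:ℝ)/3) := by
          rw [← rpow_add' ht (by norm_num : (1:ℝ)/3 + 1/3 ≠ 0)]; norm_num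
        have e2 : t ^ ((2:ℝ)/3) * t ^ ((1:ℝ)/3) = t := by
          rw [← rpow_add' ht (by norm_num : (2:ℝ)/3 + 1/3 ≠ 0)]; norm_num
        have e3 : t ^ ((1:ℝ)/3) * t ^ ((2:ℝ)/3) = t := by
          rw [← rpow_add' ht (by norm_num : (1:ℝ)/3 + 2/3 ≠ 0)]; norm_num
        show t - t ^ ((2:ℝ)/3) * t ^ ((1:ℝ)/3) -
            (t ^ ((1:ℝ)/3) * t ^ ((2:ℝ)/3) - t ^ ((1:ℝ)/3) * (t ^ ((1:ℝ)/3) * t ^ ((1:ℝ)/3)))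
          = 0
        rw [e1, e2, e3]
        ring
      rw [cfc_congr hEq]
      exact cfc_zero ℝ a
    have : x - y <• ⟪y, y⟫ = 0 := CStarModuleRight.inner_self.mp hfin
    exact sub_eq_zero.mp this
  exact ⟨y, hmain, fun z hz => uniq z y hz hmain⟩
end
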